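/- arXiv:1105.6164 — 6 statements merged into one kernel-verified Lean document; each statement's English description precedes it below -/
import Mathlib

section
/- If Q is degraded with respect to W, then the Bhattacharyya parameter satisfies Z(Q) ≥ Z(W), where Z(W) = Σ_y √(W(y|0)·W(y|1)). -/
open scoped BigOperators

/-- `P : A → B → ℝ` is a channel: nonnegative entries, rows sum to 1. -/
def IsChannel {A B : Type*} [Fintype B] (P : A → B → ℝ) : Prop :=
  (∀ a b, 0 ≤ P a b) ∧ ∀ a, ∑ b, P a b = 1

/-- `Q` is degraded with respect to `W`. -/
def DegradedWrt {A B : Type*} [Fintype A] [Fintype B]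
    (Q : Bool → B → ℝ) (W : Bool → A → ℝ) : Prop :=
  ∃ P : A → B → ℝ, IsChannel P ∧ ∀ x b, Q x b = ∑ a, W x a * P a b

/-- degrading increases the Bhattacharyya parameter. -/
theorem bhattacharyya_le_of_degraded {Y Z : Type*} [Fintype Y] [Fintype Z]
    (W : Bool → Y → ℝ) (Q : Bool → Z → ℝ)
    (hW : ∀ x y, 0 ≤ W x y) (hdeg : DegradedWrt Q W) :
    ∑ z, Real.sqrt (Q false z * Q true z) ≥
      ∑ y, Real.sqrt (W false y * W true y) := by
  obtain ⟨P, ⟨hP0, hP1⟩, hQ⟩ := hdeg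
  have key : ∀ z, ∑ y, Real.sqrt (W false y * W true y) * P y z ≤
      Real.sqrt (Q false z * Q true z) := by
    intro z
    rw [hQ false z, hQ true z]
    have hs : ∀ y ∈ Finset.univ, (Real.sqrt (W false y * W true y) * P y z) ^ 2 =
        (W false y * P y z) * (W true y * P y z) := by
      intro y _
      rw [mul_pow, Real.sq_sqrt (mul_nonneg (hW _ _) (hW _ _))]
      ring
    have := Finset.sum_sq_le_sum_mul_sum_of_sq_eq_mul Finset.univ
      (fun y _ => mul_nonneg (hW _ _) (hP0 _ _))
      (fun y _ => mul_nonneg (hW _ _) (hP0 _ _)) hs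
    have hnn : 0 ≤ ∑ y, Real.sqrt (W false y * W true y) * P y z :=
      Finset.sum_nonneg fun y _ => mul_nonneg (Real.sqrt_nonneg _) (hP0 _ _)
    exact (Real.le_sqrt hnn (mul_nonneg (Finset.sum_nonneg fun y _ => mul_nonneg (hW _ _) (hP0 _ _)) (Finset.sum_nonneg fun y _ => mul_nonneg (hW _ _) (hP0 _ _)))).mpr this
  calc ∑ y, Real.sqrt (W false y * W true y)
      = ∑ y, Real.sqrt (W false y * W true y) * ∑ z, P y z := by
        simp [hP1]
    _ = ∑ z, ∑ y, Real.sqrt (W false y * W true y) * P y z := by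
        simp_rw [Finset.mul_sum]; rw [Finset.sum_comm]
    _ ≤ ∑ z, Real.sqrt (Q false z * Q true z) :=
        Finset.sum_le_sum fun z _ => key z
end

section
/- Degradation is preserved by both Arıkan channel transforms: if Q ≼ W, then Q⊞Q ≼ W⊞W and Q⊛Q ≼ W⊛W, where (W⊞W)(y₁,y₂|u₁) = (1/2)Σ_{u₂} W(y₁|u₁⊕u₂)W(y₂|u₂) and (W⊛W)(y₁,y₂,u₁|u₂) = (1/2)W(y₁|u₁⊕u₂)W(y₂|u₂). -/
open scoped BigOperators

/-- Arıkan "minus" transform `W ⊞ W`. -/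
noncomputable def minusTransform {Y : Type*} (W : Bool → Y → ℝ) : Bool → Y × Y → ℝ :=
  fun u₁ p => (1 / 2) * ∑ u₂ : Bool, W (xor u₁ u₂) p.1 * W u₂ p.2

/-- Arıkan "plus" transform `W ⊛ W`. -/
noncomputable def plusTransform {Y : Type*} (W : Bool → Y → ℝ) : Bool → (Y × Y) × Bool → ℝ :=
  fun u₂ t => (1 / 2) * W (xor t.2 u₂) t.1.1 * W u₂ t.1.2

/-- degradation is preserved by both Arıkan transforms. -/
theorem degraded_preserved_by_transforms {Y Z : Type*} [Fintype Y] [Fintype Z]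
    (W : Bool → Y → ℝ) (Q : Bool → Z → ℝ) (hdeg : DegradedWrt Q W) :
    DegradedWrt (minusTransform Q) (minusTransform W) ∧
    DegradedWrt (plusTransform Q) (plusTransform W) := by
  obtain ⟨P, ⟨hP0, hP1⟩, hQ⟩ := hdeg
  constructor
  · refine ⟨fun p q => P p.1 q.1 * P p.2 q.2, ⟨fun p q => mul_nonneg (hP0 _ _) (hP0 _ _), ?_⟩, ?_⟩
    · intro p
      rw [Fintype.sum_prod_type, ← Finset.sum_mul_sum, hP1, hP1, one_mul]
    · intro x b
      simp only [minusTransform, hQ]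
      calc (1/2 : ℝ) * ∑ u₂ : Bool, (∑ a, W (xor x u₂) a * P a b.1) * (∑ a, W u₂ a * P a b.2)
          = ∑ u₂ : Bool, ∑ y₁, ∑ y₂,
              (1/2 : ℝ) * (W (xor x u₂) y₁ * P y₁ b.1) * (W u₂ y₂ * P y₂ b.2) := by
            rw [Finset.mul_sum]
            refine Finset.sum_congr rfl fun u₂ _ => ?_
            rw [Finset.sum_mul_sum, Finset.mul_sum]
            refine Finset.sum_congr rfl fun y₁ _ => ?_
            rw [Finset.mul_sum]
            exact Finset.sum_congr rfl fun y₂ _ => by ring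
        _ = ∑ y₁, ∑ y₂, ∑ u₂ : Bool,
              (1/2 : ℝ) * (W (xor x u₂) y₁ * P y₁ b.1) * (W u₂ y₂ * P y₂ b.2) := by
            rw [Finset.sum_comm]
            exact Finset.sum_congr rfl fun y₁ _ => Finset.sum_comm
        _ = ∑ p : Y × Y, minusTransform W x p * (P p.1 b.1 * P p.2 b.2) := by
            rw [Fintype.sum_prod_type]
            refine Finset.sum_congr rfl fun y₁ _ => Finset.sum_congr rfl fun y₂ _ => ?_
            simp only [minusTransform]
            rw [mul_assoc, Finset.sum_mul, Finset.mul_sum]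
            exact Finset.sum_congr rfl fun u₂ _ => by ring
  · refine ⟨fun t s => P t.1.1 s.1.1 * P t.1.2 s.1.2 * (if s.2 = t.2 then 1 else 0),
      ⟨fun t s => mul_nonneg (mul_nonneg (hP0 _ _) (hP0 _ _)) (by split <;> norm_num), ?_⟩, ?_⟩
    · intro t
      rw [Fintype.sum_prod_type]
      have h1 : ∀ p : Z × Z, ∑ b : Bool,
          P t.1.1 p.1 * P t.1.2 p.2 * (if b = t.2 then 1 else 0)
          = P t.1.1 p.1 * P t.1.2 p.2 := by
        intro p
        rw [Fintype.sum_eq_single t.2]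
        · simp
        · intro u hu; simp [hu]
      rw [Finset.sum_congr rfl fun p _ => h1 p]
      rw [Fintype.sum_prod_type, ← Finset.sum_mul_sum, hP1, hP1, one_mul]
    · intro x b
      simp only [plusTransform, hQ]
      have key : ∀ p : Y × Y,
          ∑ u : Bool, plusTransform W x (p, u)
            * (P p.1 b.1.1 * P p.2 b.1.2 * (if b.2 = u then 1 else 0))
          = plusTransform W x (p, b.2) * (P p.1 b.1.1 * P p.2 b.1.2) := by
        intro p
        rw [Fintype.sum_eq_single b.2]
        · simp
        · intro u hu
          simp [Ne.symm hu]
      calc (1 / 2 : ℝ) * (∑ a, W (xor b.2 x) a * P a b.1.1) * ∑ a, W x a * P a b.1.2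
          = ∑ y₁, ∑ y₂,
              (1/2 : ℝ) * (W (xor b.2 x) y₁ * P y₁ b.1.1) * (W x y₂ * P y₂ b.1.2) := by
            rw [mul_assoc, Finset.sum_mul_sum, Finset.mul_sum]
            refine Finset.sum_congr rfl fun y₁ _ => ?_
            rw [Finset.mul_sum]
            exact Finset.sum_congr rfl fun y₂ _ => by ring
        _ = ∑ p : Y × Y, plusTransform W x (p, b.2) * (P p.1 b.1.1 * P p.2 b.1.2) := by
            rw [Fintype.sum_prod_type]
            refine Finset.sum_congr rfl fun y₁ _ => Finset.sum_congr rfl fun y₂ _ => ?_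
            simp only [plusTransform]; ring
        _ = ∑ p : Y × Y, ∑ u : Bool, plusTransform W x (p, u)
              * (P p.1 b.1.1 * P p.2 b.1.2 * (if b.2 = u then 1 else 0)) :=
            Finset.sum_congr rfl fun p _ => (key p).symm
        _ = _ := by
            simp only [Fintype.sum_prod_type, plusTransform]
end

section
/- Upgrading-merge of two symbol pairs yields an upgraded channel: let W : {0,1} → Y be BMS, y₁, y₂ ∈ Y with LR values 1 ≤ λ₁ ≤ λ₂ where λᵢ = W(yᵢ|0)/W(ȳᵢ|0). Set a₁ = W(y₁|0), b₁ = W(ȳ₁|0), and (for λ₂ < ∞) α₂ = λ₂(a₁+b₁)/(λ₂+1), β₂ = (a₁+b₁)/(λ₂+1). Define Q' on Z' = Y \ {y₁,ȳ₁,y₂,ȳ₂} ∪ {z₂, z̄₂} by Q'(z₂|0) = W(y₂|0)+α₂, Q'(z₂|1) = W(y₂|1)+β₂, Q'(z̄₂|0) = W(ȳ₂|0)+β₂, Q'(z̄₂|1) = W(ȳ₂|1)+α₂, and Q' = W on remaining symbols. Then Q' is upgraded with respect to W, i.e., W is degraded with respect to Q'. -/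
open scoped BigOperators

set_option maxHeartbeats 1000000 in
/-- the two-pair upgrading merge yields an upgraded channel,
i.e. `W` is degraded with respect to `Q'`.  The new alphabet is
`(Y \ {y₁, ȳ₁, y₂, ȳ₂}) ⊕ {z₂, z̄₂}`, with `inr false = z₂`, `inr true = z̄₂`. -/
theorem upgrading_merge_two_pairs {Y : Type*} [Fintype Y] [DecidableEq Y]
    (W : Bool → Y → ℝ) (hW : IsChannel W)
    (c : Y → Y) (hc : Function.Involutive c) (hnofix : ∀ y, c y ≠ y)
    (hsym : ∀ y, W true y = W false (c y))
    (y₁ y₂ : Y) (hdist : [y₁, c y₁, y₂, c y₂].Nodup)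
    (lam₁ lam₂ a₁ b₁ α₂ β₂ : ℝ)
    (hb₁ : 0 < W false (c y₁)) (hb₂ : 0 < W false (c y₂))
    (ha₁ : a₁ = W false y₁) (hb₁' : b₁ = W false (c y₁))
    (hlam₁ : lam₁ = W false y₁ / W false (c y₁))
    (hlam₂ : lam₂ = W false y₂ / W false (c y₂))
    (hone : 1 ≤ lam₁) (hord : lam₁ ≤ lam₂)
    (hα₂ : α₂ = lam₂ * (a₁ + b₁) / (lam₂ + 1))
    (hβ₂ : β₂ = (a₁ + b₁) / (lam₂ + 1)) :
    DegradedWrt W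
      ((fun x s =>
          Sum.elim (fun w : {y : Y // y ≠ y₁ ∧ y ≠ c y₁ ∧ y ≠ y₂ ∧ y ≠ c y₂} => W x (w : Y))
            (fun b : Bool =>
              if b then (if x then W true (c y₂) + α₂ else W false (c y₂) + β₂)
              else (if x then W true y₂ + β₂ else W false y₂ + α₂)) s) :
        Bool → ({y : Y // y ≠ y₁ ∧ y ≠ c y₁ ∧ y ≠ y₂ ∧ y ≠ c y₂} ⊕ Bool) → ℝ) := by
  obtain ⟨hWnn, hWsum⟩ := hW
  -- distinctness
  have d12 : y₁ ≠ y₂ := by simp at hdist; tauto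
  have d1c2 : y₁ ≠ c y₂ := by simp at hdist; tauto
  have dc12 : c y₁ ≠ y₂ := by simp at hdist; tauto
  have dc1c2 : c y₁ ≠ c y₂ := by simp at hdist; tauto
  have d1c1 : y₁ ≠ c y₁ := (hnofix y₁).symm
  have d2c2 : y₂ ≠ c y₂ := (hnofix y₂).symm
  -- basic quantities
  have hl2 : (1:ℝ) ≤ lam₂ := hone.trans hord
  have hl2p : (0:ℝ) < lam₂ + 1 := by linarith
  have hb1p : 0 < b₁ := hb₁' ▸ hb₁
  have ha1b : a₁ = lam₁ * b₁ := by
    rw [ha₁, hb₁', hlam₁]; field_simp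
  have ha1b' : b₁ ≤ a₁ := by nlinarith
  have ha1nn : 0 ≤ a₁ := by linarith
  have hA2 : W false y₂ = lam₂ * W false (c y₂) := by
    rw [hlam₂]; field_simp
  have hβnn : 0 ≤ β₂ := by rw [hβ₂]; positivity
  have hαβ : α₂ = lam₂ * β₂ := by rw [hα₂, hβ₂]; ring
  set B2 := W false (c y₂) with hB2def
  set s := B2 + β₂ with hsdef
  have hsp : 0 < s := by positivity
  have ht : W false y₂ + α₂ = lam₂ * s := by rw [hA2, hαβ]; ring
  set g := B2 / s with hgdef
  clear_value B2 s g
  have hg0 : 0 ≤ g := by rw [hgdef]; positivity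
  obtain ⟨u, v, hu0, hv0, key1, key2, huv⟩ :
      ∃ u v : ℝ, 0 ≤ u ∧ 0 ≤ v ∧ lam₂ * s * u + s * v = a₁ ∧
        s * u + lam₂ * s * v = b₁ ∧ u + v = β₂ / s := by
    have hlb : lam₂ * b₁ - a₁ ≥ 0 := by nlinarith
    have hla : lam₂ * a₁ - b₁ ≥ 0 := by nlinarith
    by_cases h : lam₂ = 1
    · have hl1 : lam₁ = 1 := le_antisymm (h ▸ hord) hone
      have hab : a₁ = b₁ := by rw [ha1b, hl1, one_mul]
      refine ⟨(a₁ + b₁) / (4 * s), (a₁ + b₁) / (4 * s), by positivity, by positivity, ?_, ?_, ?_⟩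
      · rw [h, hab]; field_simp; ring
      · rw [h, hab]; field_simp; ring
      · rw [hβ₂, h, hab]; field_simp; ring
    · have h1 : 1 < lam₂ := lt_of_le_of_ne hl2 (Ne.symm h)
      have h2 : s * (lam₂ ^ 2 - 1) ≠ 0 := ne_of_gt (mul_pos hsp (by nlinarith))
      have h3 : lam₂ ^ 2 - 1 ≠ 0 := by
        intro hz; exact h2 (by rw [hz, mul_zero])
      refine ⟨(lam₂ * a₁ - b₁) / (s * (lam₂ ^ 2 - 1)),
        (lam₂ * b₁ - a₁) / (s * (lam₂ ^ 2 - 1)),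
        div_nonneg hla (le_of_lt (mul_pos hsp (by nlinarith))),
        div_nonneg hlb (le_of_lt (mul_pos hsp (by nlinarith))), ?_, ?_, ?_⟩
      · rw [← mul_div_assoc, ← mul_div_assoc, ← add_div, div_eq_iff h2]; ring
      · rw [← mul_div_assoc, ← mul_div_assoc, ← add_div, div_eq_iff h2]; ring
      · rw [hβ₂, ← add_div, div_div,
          div_eq_div_iff h2 (by positivity : (lam₂ + 1) * s ≠ 0)]
        ring
  have hguv : g + u + v = 1 := by
    rw [hgdef, add_assoc, huv, ← add_div, ← hsdef, div_self hsp.ne']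
  refine ⟨fun z y => Sum.elim
      (fun w : {y : Y // y ≠ y₁ ∧ y ≠ c y₁ ∧ y ≠ y₂ ∧ y ≠ c y₂} => if y = (w : Y) then 1 else 0)
      (fun b : Bool =>
        if b then (if y = c y₂ then g else 0) + (if y = c y₁ then u else 0) + (if y = y₁ then v else 0)
        else (if y = y₂ then g else 0) + (if y = y₁ then u else 0) + (if y = c y₁ then v else 0)) z,
    ⟨?_, ?_⟩, ?_⟩
  · have hite : ∀ (p : Prop) (inst : Decidable p) (r : ℝ), 0 ≤ r → 0 ≤ if p then r else 0 := by
      intro p inst r hr; split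
      · exact hr
      · exact le_rfl
    rintro (w | b) y
    · dsimp only [Sum.elim_inl]; split
      · norm_num
      · exact le_rfl
    · cases b
      · exact add_nonneg (add_nonneg (hite _ _ _ hg0) (hite _ _ _ hu0)) (hite _ _ _ hv0)
      · exact add_nonneg (add_nonneg (hite _ _ _ hg0) (hite _ _ _ hu0)) (hite _ _ _ hv0)
  · rintro (w | b)
    · simp [Sum.elim_inl]
    · dsimp only [Sum.elim_inr]
      cases b
      · simp only [Bool.false_eq_true, if_false, Finset.sum_add_distrib, Finset.sum_ite_eq',
          Finset.mem_univ, if_true]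
        linarith [hguv]
      · simp only [eq_self_iff_true, if_true, Finset.sum_add_distrib, Finset.sum_ite_eq',
          Finset.mem_univ]
        linarith [hguv]
  · have hzsum : ∀ (x : Bool) (y : Y), (y = y₁ ∨ y = c y₁ ∨ y = y₂ ∨ y = c y₂) →
        (∑ w : {y' : Y // y' ≠ y₁ ∧ y' ≠ c y₁ ∧ y' ≠ y₂ ∧ y' ≠ c y₂},
          W x ↑w * (if y = ↑w then 1 else 0)) = 0 := by
      intro x y hy
      apply Finset.sum_eq_zero
      intro w _
      have hne : y ≠ ↑w := by
        intro h
        obtain ⟨q1, q2, q3, q4⟩ := w.2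
        rcases hy with h'|h'|h'|h'
        · exact q1 (h ▸ h')
        · exact q2 (h ▸ h')
        · exact q3 (h ▸ h')
        · exact q4 (h ▸ h')
      simp [hne]
    have hcc2 : c (c y₂) = y₂ := hc y₂
    have hcc1 : c (c y₁) = y₁ := hc y₁
    have Et1 : W true y₁ = b₁ := by rw [hsym, ← hb₁']
    have Ef1 : W false y₁ = a₁ := ha₁.symm
    have Etc1 : W true (c y₁) = a₁ := by rw [hsym, hcc1, ← ha₁]
    have Efc1 : W false (c y₁) = b₁ := hb₁'.symm
    have Et2 : W true y₂ = B2 := by rw [hsym, hB2def]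
    have Ef2 : W false y₂ = lam₂ * B2 := hA2
    have Etc2 : W true (c y₂) = lam₂ * B2 := by rw [hsym, hcc2, hA2]
    have Efc2 : W false (c y₂) = B2 := hB2def.symm
    intro x y
    rw [Fintype.sum_sum_type, Fintype.sum_bool]
    dsimp only [Sum.elim_inl, Sum.elim_inr]
    by_cases h1 : y = y₁
    · subst h1
      rw [hzsum x _ (Or.inl rfl), zero_add]
      cases x
      · simp [d1c2, d1c1, d12, Ef1]
        linear_combination (-1 : ℝ) * key1 - u * ht
      · simp [d1c2, d1c1, d12, Et1, Etc2, Et2]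
        linear_combination (-1 : ℝ) * key2 + u * hsdef + lam₂ * v * hsdef - v * hαβ
    by_cases h2 : y = c y₁
    · subst h2
      rw [hzsum x (c y₁) (Or.inr (Or.inl rfl)), zero_add]
      cases x
      · simp [dc1c2, d1c1, dc12, (Ne.symm d1c1), Efc1]
        linear_combination (-1 : ℝ) * key2 - v * ht
      · simp [dc1c2, d1c1, dc12, (Ne.symm d1c1), Etc1, Etc2, Et2]
        linear_combination (-1 : ℝ) * key1 + v * hsdef + lam₂ * u * hsdef - u * hαβ
    by_cases h3 : y = y₂
    · subst h3
      rw [hzsum x _ (Or.inr (Or.inr (Or.inl rfl))), zero_add]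
      cases x
      · simp [d2c2, (Ne.symm dc12), (Ne.symm d12), Ef2]
        have hts : lam₂ * B2 + α₂ = lam₂ * s := by linear_combination ht - hA2
        rw [hgdef, hts]; field_simp
      · simp [d2c2, (Ne.symm dc12), (Ne.symm d12), Et2, Etc2]
        rw [hgdef, ← hsdef]; field_simp
    by_cases h4 : y = c y₂
    · subst h4
      rw [hzsum x (c y₂) (Or.inr (Or.inr (Or.inr rfl))), zero_add]
      cases x
      · simp [(Ne.symm d2c2), (Ne.symm dc1c2), (Ne.symm d1c2), Efc2]
        rw [hgdef]; field_simp
      · simp [(Ne.symm d2c2), (Ne.symm dc1c2), (Ne.symm d1c2), Etc2, Et2]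
        have hts : lam₂ * B2 + α₂ = lam₂ * s := by linear_combination ht - hA2
        rw [hgdef, hts]; field_simp
    · -- generic symbol
      have hsum1 : (∑ w : {y' : Y // y' ≠ y₁ ∧ y' ≠ c y₁ ∧ y' ≠ y₂ ∧ y' ≠ c y₂},
          W x ↑w * (if y = ↑w then 1 else 0)) = W x y := by
        rw [Finset.sum_eq_single (⟨y, h1, h2, h3, h4⟩ :
            {y' : Y // y' ≠ y₁ ∧ y' ≠ c y₁ ∧ y' ≠ y₂ ∧ y' ≠ c y₂})]
        · simp
        · intro w _ hw
          have hne : y ≠ ↑w := fun h => hw (Subtype.ext h.symm)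
          simp [hne]
        · intro hmem
          exact absurd (Finset.mem_univ _) hmem
      rw [hsum1]
      simp [h1, h2, h3, h4]
end

section
/- If LR(y₁) = LR(y₂), then the channel Q obtained by the degrading merge of y₁ and y₂ (summing their probabilities into one symbol pair) is equivalent to W: Q is both degraded and upgraded with respect to W. -/
open scoped BigOperators

lemma alpha_spec (a b a' b' : ℝ) (ha : 0 ≤ a) (hb : 0 ≤ b)
    (ha' : 0 ≤ a') (hb' : 0 ≤ b') (hLR : a * b' = b * a') :
    ∃ α : ℝ, 0 ≤ α ∧ α ≤ 1 ∧ a = (a + b) * α ∧ b = (a + b) * (1 - α) ∧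
      a' = (a' + b') * α ∧ b' = (a' + b') * (1 - α) := by
  by_cases h : a + b = 0
  · have ha0 : a = 0 := le_antisymm (by linarith) ha
    have hb0 : b = 0 := by linarith
    by_cases h' : a' + b' = 0
    · have ha0' : a' = 0 := le_antisymm (by linarith) ha'
      have hb0' : b' = 0 := by linarith
      exact ⟨1/2, by norm_num, by norm_num, by rw [h, zero_mul]; exact ha0,
        by rw [h, zero_mul]; exact hb0, by rw [h', zero_mul]; exact ha0',
        by rw [h', zero_mul]; exact hb0'⟩
    · have hpos : 0 < a' + b' := lt_of_le_of_ne (by linarith) (Ne.symm h')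
      refine ⟨a' / (a' + b'), by positivity, ?_, by rw [h, zero_mul]; exact ha0,
        by rw [h, zero_mul]; exact hb0, ?_, ?_⟩
      · rw [div_le_one hpos]; linarith
      · rw [eq_comm, mul_div_assoc', div_eq_iff h']; ring
      · have h1 : 1 - a' / (a' + b') = b' / (a' + b') := by field_simp; ring
        rw [h1, eq_comm, mul_div_assoc', div_eq_iff h']; ring
  · have hpos : 0 < a + b := lt_of_le_of_ne (by linarith) (Ne.symm h)
    have h1 : 1 - a / (a + b) = b / (a + b) := by field_simp; ring
    refine ⟨a / (a + b), by positivity, ?_, ?_, ?_, ?_, ?_⟩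
    · rw [div_le_one hpos]; linarith
    · rw [eq_comm, mul_div_assoc', div_eq_iff h]; ring
    · rw [h1, eq_comm, mul_div_assoc', div_eq_iff h]; ring
    · rw [eq_comm, mul_div_assoc', div_eq_iff h]; linear_combination hLR
    · rw [h1, eq_comm, mul_div_assoc', div_eq_iff h]; linear_combination -hLR

lemma sum_decomp {Y : Type*} [Fintype Y] [DecidableEq Y] (y₁ z₁ y₂ z₂ : Y)
    (g : Y → ℝ) :
    ∑ y, g y = (∑ w : {y : Y // y ≠ y₁ ∧ y ≠ z₁ ∧ y ≠ y₂ ∧ y ≠ z₂}, g w) +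
      ∑ y ∈ Finset.univ.filter (fun y => ¬(y ≠ y₁ ∧ y ≠ z₁ ∧ y ≠ y₂ ∧ y ≠ z₂)), g y := by
  rw [← Finset.sum_filter_add_sum_filter_not Finset.univ
    (fun y => y ≠ y₁ ∧ y ≠ z₁ ∧ y ≠ y₂ ∧ y ≠ z₂) g]
  congr 1
  exact Finset.sum_subtype _ (fun x => by simp) g

lemma filter_not_eq {Y : Type*} [Fintype Y] [DecidableEq Y] (y₁ z₁ y₂ z₂ : Y)
    (h : [y₁, z₁, y₂, z₂].Nodup) :
    Finset.univ.filter (fun y : Y => ¬(y ≠ y₁ ∧ y ≠ z₁ ∧ y ≠ y₂ ∧ y ≠ z₂)) =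
      {y₁, z₁, y₂, z₂} := by
  ext y
  simp [or_iff_not_and_not, and_assoc]

lemma sum_four {Y : Type*} [Fintype Y] [DecidableEq Y] (y₁ z₁ y₂ z₂ : Y)
    (h : [y₁, z₁, y₂, z₂].Nodup) (g : Y → ℝ) :
    ∑ y ∈ ({y₁, z₁, y₂, z₂} : Finset Y), g y = g y₁ + g z₁ + g y₂ + g z₂ := by
  simp only [List.nodup_cons, List.mem_cons, List.mem_singleton, List.nodup_nil] at h
  push_neg at h
  obtain ⟨⟨h1, h2, h3⟩, ⟨h4, h5⟩, h6, -⟩ := h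
  rw [Finset.sum_insert (by simp [h1, h2, h3]), Finset.sum_insert (by simp [h4, h5]),
    Finset.sum_insert (by simp [h6]), Finset.sum_singleton]
  ring

/-- if `LR(y₁) = LR(y₂)` (stated cross-multiplied, i.e.
`W(y₁|0)·W(ȳ₂|0) = W(y₂|0)·W(ȳ₁|0)`), the degrading merge of `y₁` and `y₂`
gives a channel equivalent to `W`: both degraded and upgraded w.r.t. `W`. -/
theorem merge_equal_LR_equivalent {Y : Type*} [Fintype Y] [DecidableEq Y]
    (W : Bool → Y → ℝ) (hW : IsChannel W)
    (c : Y → Y) (hc : Function.Involutive c)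
    (hsym : ∀ y, W true y = W false (c y))
    (y₁ y₂ : Y) (hdist : [y₁, c y₁, y₂, c y₂].Nodup)
    (hLR : W false y₁ * W false (c y₂) = W false y₂ * W false (c y₁)) :
    DegradedWrt
      ((fun x s =>
          Sum.elim (fun w : {y : Y // y ≠ y₁ ∧ y ≠ c y₁ ∧ y ≠ y₂ ∧ y ≠ c y₂} => W x (w : Y))
            (fun b : Bool =>
              if b then W x (c y₁) + W x (c y₂) else W x y₁ + W x y₂) s) :
        Bool → ({y : Y // y ≠ y₁ ∧ y ≠ c y₁ ∧ y ≠ y₂ ∧ y ≠ c y₂} ⊕ Bool) → ℝ)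
      W ∧
    DegradedWrt W
      ((fun x s =>
          Sum.elim (fun w : {y : Y // y ≠ y₁ ∧ y ≠ c y₁ ∧ y ≠ y₂ ∧ y ≠ c y₂} => W x (w : Y))
            (fun b : Bool =>
              if b then W x (c y₁) + W x (c y₂) else W x y₁ + W x y₂) s) :
        Bool → ({y : Y // y ≠ y₁ ∧ y ≠ c y₁ ∧ y ≠ y₂ ∧ y ≠ c y₂} ⊕ Bool) → ℝ) := by
  obtain ⟨hWnn, hWrow⟩ := hW
  have hnd := hdist
  simp only [List.nodup_cons, List.mem_cons, List.mem_singleton, List.nodup_nil] at hnd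
  push_neg at hnd
  obtain ⟨⟨d12, d13, d14, -⟩, ⟨d23, d24, -⟩, ⟨d34, -⟩, -⟩ := hnd
  have hsym' : ∀ y, W true (c y) = W false y := fun y => by rw [hsym, hc]
  constructor
  · -- Q degraded w.r.t. W
    refine ⟨fun a s => Sum.elim (fun w : {y : Y // y ≠ y₁ ∧ y ≠ c y₁ ∧ y ≠ y₂ ∧ y ≠ c y₂} =>
        if a = (w : Y) then (1:ℝ) else 0)
      (fun b : Bool => if b then (if a = c y₁ then (1:ℝ) else 0) + (if a = c y₂ then 1 else 0)
        else (if a = y₁ then (1:ℝ) else 0) + (if a = y₂ then 1 else 0)) s, ⟨?_, ?_⟩, ?_⟩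
    · rintro a (w | b)
      · dsimp; split <;> norm_num
      · cases b <;> dsimp <;> split_ifs <;> norm_num
    · intro a
      rw [Fintype.sum_sum_type, Fintype.sum_bool]
      have hd := sum_decomp y₁ (c y₁) y₂ (c y₂) (fun y => if a = y then (1:ℝ) else 0)
      rw [filter_not_eq y₁ (c y₁) y₂ (c y₂) hdist,
        sum_four y₁ (c y₁) y₂ (c y₂) hdist] at hd
      simp only [Finset.sum_ite_eq, Finset.mem_univ, if_true] at hd
      simp only [Sum.elim_inl, Sum.elim_inr, if_true, Bool.false_eq_true, if_false]
      linarith [hd]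
    · rintro x (w | b)
      · simp [mul_ite, mul_one, mul_zero, Finset.sum_ite_eq']
      · cases b <;>
          simp [mul_add, mul_ite, mul_one, mul_zero, Finset.sum_add_distrib,
            Finset.sum_ite_eq'] <;> ring
  · -- W degraded w.r.t. Q
    obtain ⟨α, hα0, hα1, e1, e2, e3, e4⟩ := alpha_spec (W false y₁) (W false y₂)
      (W false (c y₁)) (W false (c y₂)) (hWnn _ _) (hWnn _ _) (hWnn _ _) (hWnn _ _) hLR
    refine ⟨fun s y => Sum.elim (fun w : {y : Y // y ≠ y₁ ∧ y ≠ c y₁ ∧ y ≠ y₂ ∧ y ≠ c y₂} =>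
        if y = (w : Y) then (1:ℝ) else 0)
      (fun b : Bool => if b then (if y = c y₁ then α else 0) + (if y = c y₂ then 1 - α else 0)
        else (if y = y₁ then α else 0) + (if y = y₂ then 1 - α else 0)) s, ⟨?_, ?_⟩, ?_⟩
    · rintro (w | b) y
      · dsimp; split <;> norm_num
      · cases b <;> dsimp <;> split_ifs <;> linarith
    · rintro (w | b)
      · simp [Finset.sum_ite_eq']
      · cases b <;>
          simp [Finset.sum_add_distrib, Finset.sum_ite_eq'] <;> ring
    · intro x y
      rw [Fintype.sum_sum_type, Fintype.sum_bool]
      have hsub : (∑ w : {y : Y // y ≠ y₁ ∧ y ≠ c y₁ ∧ y ≠ y₂ ∧ y ≠ c y₂},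
          W x (↑w) * (if y = (↑w : Y) then (1:ℝ) else 0)) =
          if y ≠ y₁ ∧ y ≠ c y₁ ∧ y ≠ y₂ ∧ y ≠ c y₂ then W x y else 0 := by
        rw [← Finset.sum_subtype
          (Finset.univ.filter fun z : Y => z ≠ y₁ ∧ z ≠ c y₁ ∧ z ≠ y₂ ∧ z ≠ c y₂)
          (fun z => by simp) (fun z => W x z * (if y = z then (1:ℝ) else 0))]
        simp [mul_ite, Finset.sum_ite_eq]
      simp only [Sum.elim_inl, Sum.elim_inr, if_true, Bool.false_eq_true, if_false]
      rw [hsub]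
      by_cases h1 : y = y₁
      · subst h1
        cases x <;>
          simp [d12, d13, d14, hsym, hsym', hc y, hc y₂] <;> linarith [e1, e3]
      by_cases h2 : y = c y₁
      · subst h2
        cases x <;>
          simp [d12.symm, d23, d24, hsym, hsym', hc y₁, hc y₂] <;> linarith [e1, e3]
      by_cases h3 : y = y₂
      · subst h3
        cases x <;>
          simp [d13.symm, d23.symm, d34, hsym, hsym', hc y₁, hc y] <;> linarith [e2, e4]
      by_cases h4 : y = c y₂
      · subst h4
        cases x <;>
          simp [d14.symm, d24.symm, d34.symm, hsym, hsym', hc y₁, hc y₂] <;> linarith [e2, e4]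
      · simp [h1, h2, h3, h4]
end

section
/- Upgrading-merge of three symbol pairs yields an upgraded channel: let W be BMS with symbols y₁,y₂,y₃ having LR values 1 ≤ λ₁ < λ₂ < λ₃ < ∞. Set a₂ = W(y₂|0), b₂ = W(ȳ₂|0), α₁ = λ₁(λ₃b₂−a₂)/(λ₃−λ₁), β₁ = (λ₃b₂−a₂)/(λ₃−λ₁), α₃ = λ₃(a₂−λ₁b₂)/(λ₃−λ₁), β₃ = (a₂−λ₁b₂)/(λ₃−λ₁). Define Q' on Y \ {y₁,ȳ₁,y₂,ȳ₂,y₃,ȳ₃} ∪ {z₁,z̄₁,z₃,z̄₃} by Q'(z₁|0) = W(y₁|0)+α₁, Q'(z₁|1) = W(y₁|1)+β₁, Q'(z₃|0) = W(y₃|0)+α₃, Q'(z₃|1) = W(y₃|1)+β₃, symmetric values on conjugates, and Q' = W elsewhere. Then Q' is upgraded with respect to W. -/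
open scoped BigOperators

set_option maxHeartbeats 1000000 in
/-- the three-pair upgrading merge yields an upgraded channel.
The new alphabet is `(Y \ {y₁,ȳ₁,y₂,ȳ₂,y₃,ȳ₃}) ⊕ (Bool × Bool)`, with
`inr (false,false) = z₁`, `inr (false,true) = z̄₁`,
`inr (true,false) = z₃`, `inr (true,true) = z̄₃`. -/
theorem upgrading_merge_three_pairs {Y : Type*} [Fintype Y] [DecidableEq Y]
    (W : Bool → Y → ℝ) (hW : IsChannel W)
    (c : Y → Y) (hc : Function.Involutive c) (hnofix : ∀ y, c y ≠ y)
    (hsym : ∀ y, W true y = W false (c y))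
    (y₁ y₂ y₃ : Y) (hdist : [y₁, c y₁, y₂, c y₂, y₃, c y₃].Nodup)
    (lam₁ lam₂ lam₃ a₂ b₂ α₁ β₁ α₃ β₃ : ℝ)
    (hb₁ : 0 < W false (c y₁)) (hb₂ : 0 < W false (c y₂)) (hb₃ : 0 < W false (c y₃))
    (hlam₁ : lam₁ = W false y₁ / W false (c y₁))
    (hlam₂ : lam₂ = W false y₂ / W false (c y₂))
    (hlam₃ : lam₃ = W false y₃ / W false (c y₃))
    (ha₂ : a₂ = W false y₂) (hb₂' : b₂ = W false (c y₂))
    (hone : 1 ≤ lam₁) (hord₁₂ : lam₁ < lam₂) (hord₂₃ : lam₂ < lam₃)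
    (hα₁ : α₁ = lam₁ * (lam₃ * b₂ - a₂) / (lam₃ - lam₁))
    (hβ₁ : β₁ = (lam₃ * b₂ - a₂) / (lam₃ - lam₁))
    (hα₃ : α₃ = lam₃ * (a₂ - lam₁ * b₂) / (lam₃ - lam₁))
    (hβ₃ : β₃ = (a₂ - lam₁ * b₂) / (lam₃ - lam₁)) :
    DegradedWrt W
      ((fun x s =>
          Sum.elim
            (fun w : {y : Y // y ≠ y₁ ∧ y ≠ c y₁ ∧ y ≠ y₂ ∧ y ≠ c y₂ ∧ y ≠ y₃ ∧ y ≠ c y₃} =>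
              W x (w : Y))
            (fun b : Bool × Bool =>
              match b with
              | (false, false) => if x then W true y₁ + β₁ else W false y₁ + α₁
              | (false, true) => if x then W true (c y₁) + α₁ else W false (c y₁) + β₁
              | (true, false) => if x then W true y₃ + β₃ else W false y₃ + α₃
              | (true, true) => if x then W true (c y₃) + α₃ else W false (c y₃) + β₃) s) :
        Bool →
          ({y : Y // y ≠ y₁ ∧ y ≠ c y₁ ∧ y ≠ y₂ ∧ y ≠ c y₂ ∧ y ≠ y₃ ∧ y ≠ c y₃} ⊕ (Bool × Bool))
          → ℝ) := by
  classical
  simp only [List.nodup_cons, List.mem_cons, List.not_mem_nil, or_false, not_or,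
    List.nodup_nil, and_true] at hdist
  obtain ⟨⟨h12, h13, h14, h15, h16⟩, ⟨h23, h24, h25, h26⟩, ⟨h34, h35, h36⟩, ⟨h45, h46⟩, h56, -⟩ :=
    hdist
  have h11 : y₁ ≠ c y₁ := (hnofix y₁).symm
  have h33 : y₂ ≠ c y₂ := (hnofix y₂).symm
  have h55 : y₃ ≠ c y₃ := (hnofix y₃).symm
  -- numeric facts
  have hl1 : (0:ℝ) < lam₁ := lt_of_lt_of_le one_pos hone
  have hl2 : (0:ℝ) < lam₂ := hl1.trans hord₁₂
  have hl3 : (0:ℝ) < lam₃ := hl2.trans hord₂₃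
  have hd : (0:ℝ) < lam₃ - lam₁ := by linarith
  have ha1 : W false y₁ = lam₁ * W false (c y₁) := by
    rw [hlam₁]; field_simp
  have ha2 : a₂ = lam₂ * b₂ := by
    rw [ha₂, hb₂', hlam₂]; field_simp
  have ha3 : W false y₃ = lam₃ * W false (c y₃) := by
    rw [hlam₃]; field_simp
  have hb2pos : (0:ℝ) < b₂ := hb₂' ▸ hb₂
  have hβ1pos : (0:ℝ) < β₁ := by
    rw [hβ₁]; apply div_pos _ hd; nlinarith
  have hβ3pos : (0:ℝ) < β₃ := by
    rw [hβ₃]; apply div_pos _ hd; nlinarith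
  have hα1β : α₁ = lam₁ * β₁ := by rw [hα₁, hβ₁]; ring
  have hα3β : α₃ = lam₃ * β₃ := by rw [hα₃, hβ₃]; ring
  have hαsum : α₁ + α₃ = W false y₂ := by
    rw [hα₁, hα₃, ← ha₂]; field_simp; ring
  have hβsum : β₁ + β₃ = W false (c y₂) := by
    rw [hβ₁, hβ₃, ← hb₂']; field_simp; ring
  have hα1pos : (0:ℝ) < α₁ := by rw [hα1β]; exact mul_pos hl1 hβ1pos
  have hα3pos : (0:ℝ) < α₃ := by rw [hα3β]; exact mul_pos hl3 hβ3pos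
  have hB1pos : (0:ℝ) < W false (c y₁) + β₁ := by linarith
  have hB3pos : (0:ℝ) < W false (c y₃) + β₃ := by linarith
  have hA1 : W false y₁ + α₁ = lam₁ * (W false (c y₁) + β₁) := by rw [ha1, hα1β]; ring
  have hA3 : W false y₃ + α₃ = lam₃ * (W false (c y₃) + β₃) := by rw [ha3, hα3β]; ring
  have hA1pos : (0:ℝ) < W false y₁ + α₁ := by rw [hA1]; positivity
  have hA3pos : (0:ℝ) < W false y₃ + α₃ := by rw [hA3]; positivity
  set p₁ := W false y₁ / (W false y₁ + α₁) with hp₁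
  set q₁ := α₁ / (W false y₁ + α₁) with hq₁
  set p₃ := W false y₃ / (W false y₃ + α₃) with hp₃
  set q₃ := α₃ / (W false y₃ + α₃) with hq₃
  have hp1nn : 0 ≤ p₁ := div_nonneg (hW.1 _ _) hA1pos.le
  have hq1nn : 0 ≤ q₁ := div_nonneg hα1pos.le hA1pos.le
  have hp3nn : 0 ≤ p₃ := div_nonneg (hW.1 _ _) hA3pos.le
  have hq3nn : 0 ≤ q₃ := div_nonneg hα3pos.le hA3pos.le
  have hpq1 : p₁ + q₁ = 1 := by rw [hp₁, hq₁, ← add_div, div_self hA1pos.ne']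
  have hpq3 : p₃ + q₃ = 1 := by rw [hp₃, hq₃, ← add_div, div_self hA3pos.ne']
  have k1a : (W false y₁ + α₁) * p₁ = W false y₁ := by
    rw [hp₁]; field_simp
  have k1q : (W false y₁ + α₁) * q₁ = α₁ := by
    rw [hq₁]; field_simp
  have k3a : (W false y₃ + α₃) * p₃ = W false y₃ := by
    rw [hp₃]; field_simp
  have k3q : (W false y₃ + α₃) * q₃ = α₃ := by
    rw [hq₃]; field_simp
  have hp1' : p₁ = W false (c y₁) / (W false (c y₁) + β₁) := by
    rw [hp₁, hA1, ha1, mul_div_mul_left _ _ hl1.ne']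
  have hq1' : q₁ = β₁ / (W false (c y₁) + β₁) := by
    rw [hq₁, hA1, hα1β, mul_div_mul_left _ _ hl1.ne']
  have hp3' : p₃ = W false (c y₃) / (W false (c y₃) + β₃) := by
    rw [hp₃, hA3, ha3, mul_div_mul_left _ _ hl3.ne']
  have hq3' : q₃ = β₃ / (W false (c y₃) + β₃) := by
    rw [hq₃, hA3, hα3β, mul_div_mul_left _ _ hl3.ne']
  have k1b : (W false (c y₁) + β₁) * p₁ = W false (c y₁) := by
    rw [hp1']; field_simp
  have k1r : (W false (c y₁) + β₁) * q₁ = β₁ := by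
    rw [hq1']; field_simp
  have k3b : (W false (c y₃) + β₃) * p₃ = W false (c y₃) := by
    rw [hp3']; field_simp
  have k3r : (W false (c y₃) + β₃) * q₃ = β₃ := by
    rw [hq3']; field_simp
  clear_value p₁ q₁ p₃ q₃
  have hrow : ∀ (u v : Y) (p q : ℝ), u ≠ v →
      ∑ y : Y, (if y = u then p else if y = v then q else 0) = p + q := by
    intro u v p q huv
    have hpt : ∀ y : Y, (if y = u then p else if y = v then q else 0)
        = (if y = u then p else 0) + (if y = v then q else 0) := by
      intro y
      by_cases h1 : y = u
      · subst h1; simp [huv]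
      · by_cases h2 : y = v <;> simp [h1, h2, Ne.symm huv]
    simp only [hpt, Finset.sum_add_distrib, Finset.sum_ite_eq', Finset.mem_univ, if_true]
  -- the intermediate channel
  refine ⟨fun s y => Sum.elim (fun w : {y : Y // y ≠ y₁ ∧ y ≠ c y₁ ∧ y ≠ y₂ ∧ y ≠ c y₂ ∧ y ≠ y₃ ∧ y ≠ c y₃} => if y = (w : Y) then (1:ℝ) else 0)
    (fun b => match b with
      | (false, false) => if y = y₁ then p₁ else if y = y₂ then q₁ else 0
      | (false, true)  => if y = c y₁ then p₁ else if y = c y₂ then q₁ else 0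
      | (true, false)  => if y = y₃ then p₃ else if y = y₂ then q₃ else 0
      | (true, true)   => if y = c y₃ then p₃ else if y = c y₂ then q₃ else 0) s,
    ⟨?_, ?_⟩, ?_⟩
  · rintro (w | ⟨b1, b2⟩) y
    · dsimp only [Sum.elim_inl]; split_ifs <;> norm_num
    · rcases b1 <;> rcases b2 <;> dsimp only [Sum.elim_inr] <;> split_ifs <;>
        first | exact hp1nn | exact hq1nn | exact hp3nn | exact hq3nn | exact le_refl 0
  · rintro (w | ⟨b1, b2⟩)
    · simp [Finset.sum_ite_eq']
    · rcases b1 <;> rcases b2 <;> dsimp only [Sum.elim_inr]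
      · rw [hrow _ _ _ _ h13]; exact hpq1
      · rw [hrow _ _ _ _ h24]; exact hpq1
      · rw [hrow _ _ _ _ (Ne.symm h35)]; exact hpq3
      · rw [hrow _ _ _ _ (Ne.symm h46)]; exact hpq3
  · intro x y
    rw [Fintype.sum_sum_type, Fintype.sum_prod_type, Fintype.sum_bool]
    simp only [Fintype.sum_bool, Sum.elim_inl, Sum.elim_inr]
    have hinlzero : ∀ (x : Bool) (z : Y),
        (z = y₁ ∨ z = c y₁ ∨ z = y₂ ∨ z = c y₂ ∨ z = y₃ ∨ z = c y₃) →
        (∑ w : {y : Y // y ≠ y₁ ∧ y ≠ c y₁ ∧ y ≠ y₂ ∧ y ≠ c y₂ ∧ y ≠ y₃ ∧ y ≠ c y₃},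
          W x ↑w * if z = ↑w then 1 else 0) = 0 := by
      intro x z hz
      apply Finset.sum_eq_zero
      intro w _
      rw [if_neg, mul_zero]
      intro h
      rw [h] at hz
      obtain ⟨n1, n2, n3, n4, n5, n6⟩ := w.2
      tauto
    have hinlW : ∀ (x : Bool) (z : Y)
        (h : z ≠ y₁ ∧ z ≠ c y₁ ∧ z ≠ y₂ ∧ z ≠ c y₂ ∧ z ≠ y₃ ∧ z ≠ c y₃),
        (∑ w : {y : Y // y ≠ y₁ ∧ y ≠ c y₁ ∧ y ≠ y₂ ∧ y ≠ c y₂ ∧ y ≠ y₃ ∧ y ≠ c y₃},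
          W x ↑w * if z = ↑w then 1 else 0) = W x z := by
      intro x z h
      rw [Fintype.sum_eq_single (⟨z, h⟩ :
          {y : Y // y ≠ y₁ ∧ y ≠ c y₁ ∧ y ≠ y₂ ∧ y ≠ c y₂ ∧ y ≠ y₃ ∧ y ≠ c y₃})]
      · simp
      · intro w hw
        rw [if_neg, mul_zero]
        intro hzw
        exact hw (Subtype.ext hzw.symm)
    rcases eq_or_ne y y₁ with rfl | hy1
    · rw [hinlzero x y (Or.inl rfl)]
      cases x <;> simp [hsym, hc y, hc y₂, hc y₃, h11, h13, h14, h15, h16] <;>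
        linarith [k1a, k1b, k1q, k1r, k3a, k3b, k3q, k3r, hαsum, hβsum]
    rcases eq_or_ne y (c y₁) with rfl | hy2
    · rw [hinlzero x (c y₁) (Or.inr (Or.inl rfl))]
      cases x <;> simp [hsym, hc y₁, hc y₂, hc y₃, hnofix y₁, h23, h24, h25, h26] <;>
        linarith [k1a, k1b, k1q, k1r, k3a, k3b, k3q, k3r, hαsum, hβsum]
    rcases eq_or_ne y y₂ with rfl | hy3
    · rw [hinlzero x y (Or.inr (Or.inr (Or.inl rfl)))]
      cases x <;> simp [hsym, hc y₁, hc y, hc y₃, Ne.symm h13, Ne.symm h23, h34, h35, h36] <;>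
        linarith [k1a, k1b, k1q, k1r, k3a, k3b, k3q, k3r, hαsum, hβsum]
    rcases eq_or_ne y (c y₂) with rfl | hy4
    · rw [hinlzero x (c y₂) (Or.inr (Or.inr (Or.inr (Or.inl rfl))))]
      cases x <;> simp [hsym, hc y₁, hc y₂, hc y₃, Ne.symm h14, Ne.symm h24, Ne.symm h34, h45, h46] <;>
        linarith [k1a, k1b, k1q, k1r, k3a, k3b, k3q, k3r, hαsum, hβsum]
    rcases eq_or_ne y y₃ with rfl | hy5
    · rw [hinlzero x y (Or.inr (Or.inr (Or.inr (Or.inr (Or.inl rfl)))))]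
      cases x <;> simp [hsym, hc y₁, hc y₂, hc y, Ne.symm h15, Ne.symm h25, Ne.symm h35, Ne.symm h45, h55] <;>
        linarith [k1a, k1b, k1q, k1r, k3a, k3b, k3q, k3r, hαsum, hβsum]
    rcases eq_or_ne y (c y₃) with rfl | hy6
    · rw [hinlzero x (c y₃) (Or.inr (Or.inr (Or.inr (Or.inr (Or.inr rfl)))))]
      cases x <;> simp [hsym, hc y₁, hc y₂, hc y₃, Ne.symm h16, Ne.symm h26, Ne.symm h36, Ne.symm h46,
          hnofix y₃] <;>
        linarith [k1a, k1b, k1q, k1r, k3a, k3b, k3q, k3r, hαsum, hβsum]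
    · rw [hinlW x y ⟨hy1, hy2, hy3, hy4, hy5, hy6⟩]
      simp [hy1, hy2, hy3, hy4, hy5, hy6]
end

section
/- Let ζ(i,m) ∈ [0,1] be defined for m ≥ 0 and 0 ≤ i < 2^m, satisfying ζ(i,m) ≤ 2ζ(i',m−1) − ζ(i',m−1)² when the last bit of i is 0 and ζ(i,m) ≤ ζ(i',m−1)² when it is 1, where i' is i with its last bit removed. Then for every β < 1/2, liminf_{m→∞} |{i : ζ(i,m) < 2^{−(2^m)^β}}| / 2^m ≥ 1 − ζ(0,0). -/
open Filter Finset

namespace ZetaPolAux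

/-- number of ones in binary representation -/
def w : ℕ → ℕ
  | 0 => 0
  | n+1 => (n+1) % 2 + w ((n+1)/2)
decreasing_by exact Nat.div_lt_self (Nat.succ_pos n) one_lt_two

lemma w_two_mul (q : ℕ) : w (2*q) = w q := by
  cases q with
  | zero => rfl
  | succ q' =>
    show w (2*q'+1+1) = w (q'+1)
    rw [w]
    have h1 : (2*q'+1+1) % 2 = 0 := by omega
    have h2 : (2*q'+1+1) / 2 = q'+1 := by omega
    rw [h1, h2]; omega

lemma w_two_mul_add_one (q : ℕ) : w (2*q+1) = w q + 1 := by
  rw [show 2*q+1 = (2*q)+1 from rfl, w]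
  have h1 : (2*q+1) % 2 = 1 := by omega
  have h2 : (2*q+1) / 2 = q := by omega
  rw [h1, h2]; omega

/-- split a sum over `range (2*n)` into even and odd parts -/
lemma sum_split (f : ℕ → ℝ) (n : ℕ) :
    ∑ i ∈ range (2*n), f i = ∑ q ∈ range n, (f (2*q) + f (2*q+1)) := by
  induction n with
  | zero => simp
  | succ n ih =>
    rw [show 2*(n+1) = (2*n)+1+1 by ring, sum_range_succ, sum_range_succ, sum_range_succ, ih,
      add_assoc]

lemma sum_w (t : ℕ) : ∑ r ∈ range (2^t), (w r : ℝ) = (t:ℝ) * 2^t / 2 := by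
  induction t with
  | zero => simp [w]
  | succ t ih =>
    rw [show (2:ℕ)^(t+1) = 2*2^t by ring, sum_split]
    have : ∀ q, ((w (2*q) : ℝ) + (w (2*q+1) : ℝ)) = 2 * (w q : ℝ) + 1 := by
      intro q; rw [w_two_mul, w_two_mul_add_one]; push_cast; ring
    rw [Finset.sum_congr rfl (fun q _ => this q), Finset.sum_add_distrib, ← Finset.mul_sum, ih]
    simp [Finset.sum_const]
    push_cast
    ring

lemma sum_w_sq (t : ℕ) : ∑ r ∈ range (2^t), (w r : ℝ)^2 = (t:ℝ) * ((t:ℝ)+1) * 2^t / 4 := by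
  induction t with
  | zero => simp [w]
  | succ t ih =>
    rw [show (2:ℕ)^(t+1) = 2*2^t by ring, sum_split]
    have : ∀ q, ((w (2*q) : ℝ)^2 + (w (2*q+1) : ℝ)^2) = 2 * (w q : ℝ)^2 + 2*(w q:ℝ) + 1 := by
      intro q; rw [w_two_mul, w_two_mul_add_one]; push_cast; ring
    rw [Finset.sum_congr rfl (fun q _ => this q)]
    rw [Finset.sum_add_distrib, Finset.sum_add_distrib, ← Finset.mul_sum, ← Finset.mul_sum, ih,
      sum_w]
    simp [Finset.sum_const]
    push_cast
    ring

lemma sum_dev_sq (t : ℕ) :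
    ∑ r ∈ range (2^t), ((w r : ℝ) - (t:ℝ)/2)^2 = (t:ℝ) * 2^t / 4 := by
  have e : ∀ r, ((w r : ℝ) - (t:ℝ)/2)^2
      = ((w r:ℝ)^2 - (t:ℝ) * (w r:ℝ)) + (t:ℝ)^2/4 := by intro r; ring
  rw [Finset.sum_congr rfl (fun r _ => e r), Finset.sum_add_distrib, Finset.sum_sub_distrib,
    ← Finset.mul_sum, sum_w, sum_w_sq]
  simp [Finset.sum_const]
  push_cast
  ring

/-- Chebyshev-type counting bound on the number of `r < 2^t` with few ones. -/
lemma chebyshev (t : ℕ) (θ : ℝ) (hθ : θ ≤ (t:ℝ)/2) :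
    ((((range (2^t)).filter (fun r => (w r : ℝ) ≤ θ)).card : ℝ) * ((t:ℝ)/2 - θ)^2)
      ≤ (t:ℝ) * 2^t / 4 := by
  calc ((((range (2^t)).filter (fun r => (w r : ℝ) ≤ θ)).card : ℝ) * ((t:ℝ)/2 - θ)^2)
      = ∑ _r ∈ (range (2^t)).filter (fun r => (w r : ℝ) ≤ θ), ((t:ℝ)/2 - θ)^2 := by
        rw [Finset.sum_const]; ring
    _ ≤ ∑ r ∈ (range (2^t)).filter (fun r => (w r : ℝ) ≤ θ), ((w r : ℝ) - (t:ℝ)/2)^2 := by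
        apply Finset.sum_le_sum
        intro r hr
        have hw : (w r : ℝ) ≤ θ := (Finset.mem_filter.mp hr).2
        have h1 : ((t:ℝ)/2 - θ) ≤ ((t:ℝ)/2 - (w r:ℝ)) := by linarith
        have h2 : (0:ℝ) ≤ (t:ℝ)/2 - θ := by linarith
        calc ((t:ℝ)/2 - θ)^2 ≤ ((t:ℝ)/2 - (w r:ℝ))^2 := by nlinarith
          _ = ((w r : ℝ) - (t:ℝ)/2)^2 := by ring
    _ ≤ ∑ r ∈ range (2^t), ((w r : ℝ) - (t:ℝ)/2)^2 := by
        apply Finset.sum_le_sum_of_subset_of_nonneg (Finset.filter_subset _ _)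
        intro i _ _; positivity
    _ = (t:ℝ) * 2^t / 4 := sum_dev_sq t

lemma w_le (t : ℕ) : ∀ r < 2^t, w r ≤ t := by
  induction t with
  | zero => intro r hr; interval_cases r; simp [w]
  | succ t ih =>
    intro r hr
    rcases Nat.even_or_odd r with ⟨q, hq⟩ | ⟨q, hq⟩
    · subst hq
      rw [show q + q = 2*q by ring, w_two_mul]
      have : q < 2^t := by rw [pow_succ] at hr; omega
      exact le_trans (ih q this) (Nat.le_succ t)
    · subst hq
      rw [w_two_mul_add_one]
      have : q < 2^t := by rw [pow_succ] at hr; omega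
      exact Nat.succ_le_succ (ih q this)




/-- the exact BEC Bhattacharyya recursion started at `c` -/
noncomputable def Z (c : ℝ) : ℕ → ℕ → ℝ
  | 0, _ => c
  | (m+1), i => if i % 2 = 0 then 2 * Z c m (i/2) - (Z c m (i/2))^2 else (Z c m (i/2))^2

lemma Z_mem {c : ℝ} (hc : c ∈ Set.Icc (0:ℝ) 1) : ∀ m i, Z c m i ∈ Set.Icc (0:ℝ) 1 := by
  intro m
  induction m with
  | zero => intro i; exact hc
  | succ m ih =>
    intro i
    obtain ⟨h0, h1⟩ := ih (i/2)
    rcases Nat.even_or_odd i with ⟨q, hq⟩ | ⟨q, hq⟩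
    · have : i % 2 = 0 := by omega
      simp only [Z, this, if_pos]
      constructor <;> nlinarith
    · have h2 : i % 2 = 1 := by omega
      simp only [Z, h2]
      rw [if_neg (by omega : ¬ (1:ℕ) = 0)]
      exact ⟨sq_nonneg _, by nlinarith⟩

lemma Z_even {c : ℝ} (m q : ℕ) : Z c (m+1) (2*q) = 2 * Z c m q - (Z c m q)^2 := by
  have h0 : (2*q) % 2 = 0 := by omega
  have h2 : (2*q) / 2 = q := by omega
  simp only [Z, h0, h2, if_pos]

lemma Z_odd {c : ℝ} (m q : ℕ) : Z c (m+1) (2*q+1) = (Z c m q)^2 := by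
  have h0 : (2*q+1) % 2 = 1 := by omega
  have h2 : (2*q+1) / 2 = q := by omega
  simp only [Z, h0, h2]
  rw [if_neg (by omega : ¬ (1:ℕ) = 0)]


lemma Z_sum {c : ℝ} (m : ℕ) : ∑ i ∈ range (2^m), Z c m i = 2^m * c := by
  induction m with
  | zero => simp [Z]
  | succ m ih =>
    rw [show (2:ℕ)^(m+1) = 2*2^m by ring, sum_split]
    have : ∀ q, Z c (m+1) (2*q) + Z c (m+1) (2*q+1) = 2 * Z c m q := by
      intro q; rw [Z_even, Z_odd]; ring
    rw [Finset.sum_congr rfl (fun q _ => this q), ← Finset.mul_sum, ih]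
    ring

/-- pointwise contraction for the square-root-of-variance sum -/
lemma key_sqrt {z : ℝ} (hz : z ∈ Set.Icc (0:ℝ) 1) :
    Real.sqrt ((2*z - z^2) * (1 - (2*z - z^2))) + Real.sqrt (z^2 * (1 - z^2))
      ≤ Real.sqrt 3 * Real.sqrt (z * (1-z)) := by
  obtain ⟨h0, h1⟩ := hz
  have e1 : (2*z - z^2) * (1 - (2*z - z^2)) = (z * (1-z)) * ((2-z)*(1-z)) := by ring
  have e2 : z^2 * (1 - z^2) = (z * (1-z)) * (z*(1+z)) := by ring
  have hz1 : (0:ℝ) ≤ z * (1-z) := by nlinarith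
  have hA : (0:ℝ) ≤ (2-z)*(1-z) := by nlinarith
  have hB : (0:ℝ) ≤ z*(1+z) := by nlinarith
  rw [e1, e2, Real.sqrt_mul hz1, Real.sqrt_mul hz1]
  rw [← mul_add, mul_comm (Real.sqrt 3) _]
  apply mul_le_mul_of_nonneg_left _ (Real.sqrt_nonneg _)
  -- show √((2-z)(1-z)) + √(z(1+z)) ≤ √3
  have hsum : (Real.sqrt ((2-z)*(1-z)) + Real.sqrt (z*(1+z)))^2 ≤ 3 := by
    have hsq : Real.sqrt ((2-z)*(1-z)) ^ 2 = (2-z)*(1-z) := Real.sq_sqrt hA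
    have hsq2 : Real.sqrt (z*(1+z)) ^ 2 = z*(1+z) := Real.sq_sqrt hB
    have hprod : Real.sqrt ((2-z)*(1-z)) * Real.sqrt (z*(1+z))
        = Real.sqrt (((2-z)*(1-z)) * (z*(1+z))) := (Real.sqrt_mul hA _).symm
    have hple : Real.sqrt (((2-z)*(1-z)) * (z*(1+z))) ≤ (1 + 2*z - 2*z^2)/2 := by
      have h2 : ((2-z)*(1-z)) * (z*(1+z)) ≤ ((1 + 2*z - 2*z^2)/2)^2 := by nlinarith [sq_nonneg (1-2*z)]
      calc Real.sqrt (((2-z)*(1-z)) * (z*(1+z))) ≤ Real.sqrt (((1 + 2*z - 2*z^2)/2)^2) :=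
            Real.sqrt_le_sqrt h2
        _ = |(1 + 2*z - 2*z^2)/2| := Real.sqrt_sq_eq_abs _
        _ = (1 + 2*z - 2*z^2)/2 := abs_of_nonneg (by nlinarith)
    nlinarith [Real.sqrt_nonneg ((2-z)*(1-z)), Real.sqrt_nonneg (z*(1+z))]
  have h3 : Real.sqrt ((2-z)*(1-z)) + Real.sqrt (z*(1+z)) ≥ 0 := by positivity
  calc Real.sqrt ((2-z)*(1-z)) + Real.sqrt (z*(1+z))
      = Real.sqrt ((Real.sqrt ((2-z)*(1-z)) + Real.sqrt (z*(1+z)))^2) :=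
        (Real.sqrt_sq h3).symm
    _ ≤ Real.sqrt 3 := Real.sqrt_le_sqrt hsum

lemma H_le {c : ℝ} (hc : c ∈ Set.Icc (0:ℝ) 1) (m : ℕ) :
    ∑ i ∈ range (2^m), Real.sqrt (Z c m i * (1 - Z c m i)) ≤ Real.sqrt 3 ^ m * (1/2) := by
  induction m with
  | zero =>
    obtain ⟨h0, h1⟩ := hc
    have hle : c * (1-c) ≤ (1/2)^2 := by nlinarith [sq_nonneg (1 - 2*c)]
    have : Real.sqrt (c * (1-c)) ≤ 1/2 := by
      calc Real.sqrt (c * (1-c)) ≤ Real.sqrt ((1/2)^2) := Real.sqrt_le_sqrt hle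
        _ = 1/2 := by rw [Real.sqrt_sq] <;> norm_num
    simpa [Z] using this
  | succ m ih =>
    rw [show (2:ℕ)^(m+1) = 2*2^m by ring, sum_split]
    have hstep : ∀ q, Real.sqrt (Z c (m+1) (2*q) * (1 - Z c (m+1) (2*q)))
        + Real.sqrt (Z c (m+1) (2*q+1) * (1 - Z c (m+1) (2*q+1)))
        ≤ Real.sqrt 3 * Real.sqrt (Z c m q * (1 - Z c m q)) := by
      intro q
      rw [Z_even, Z_odd]
      exact key_sqrt (Z_mem hc m q)
    calc ∑ q ∈ range (2^m), (Real.sqrt (Z c (m+1) (2*q) * (1 - Z c (m+1) (2*q)))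
          + Real.sqrt (Z c (m+1) (2*q+1) * (1 - Z c (m+1) (2*q+1))))
        ≤ ∑ q ∈ range (2^m), Real.sqrt 3 * Real.sqrt (Z c m q * (1 - Z c m q)) :=
          Finset.sum_le_sum (fun q _ => hstep q)
      _ = Real.sqrt 3 * ∑ q ∈ range (2^m), Real.sqrt (Z c m q * (1 - Z c m q)) :=
          (Finset.mul_sum _ _ _).symm
      _ ≤ Real.sqrt 3 * (Real.sqrt 3 ^ m * (1/2)) := by
          apply mul_le_mul_of_nonneg_left ih (Real.sqrt_nonneg _)
      _ = Real.sqrt 3 ^ (m+1) * (1/2) := by ring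

lemma descend {c : ℝ} (hc : c ∈ Set.Icc (0:ℝ) 1) (e : ℝ) :
    ∀ (t n j r : ℕ), r < 2^t → Z c n j ≤ (2:ℝ)^e →
      Z c (n+t) (j * 2^t + r) ≤ (2:ℝ)^(((2:ℝ)^(w r)) * (e + (t:ℝ) - (w r:ℝ))) := by
  intro t
  induction t with
  | zero =>
    intro n j r hr hz
    interval_cases r
    simpa [w] using hz
  | succ t ih =>
    intro n j r hr hz
    set q := r/2 with hqdef
    have hq : q < 2^t := by
      have h2 : (2:ℕ)^(t+1) = 2^t * 2 := pow_succ 2 t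
      omega
    have hb : r % 2 = 0 ∨ r % 2 = 1 := by omega
    have hrq : r = 2*q + r % 2 := by omega
    have hidx : j * 2^(t+1) + r = 2 * (j * 2^t + q) + r % 2 := by
      have h2 : j * 2^(t+1) = 2 * (j * 2^t) := by rw [pow_succ]; ring
      omega
    have hIH := ih n j q hq hz
    set p := j * 2^t + q with hpdef
    have hp0 : 0 ≤ Z c (n+t) p := (Z_mem hc _ _).1
    set E := ((2:ℝ)^(w q)) * (e + (t:ℝ) - (w q:ℝ)) with hEdef
    rcases hb with hb | hb
    · -- even step
      have hw : w r = w q := by rw [hrq, hb, add_zero, w_two_mul]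
      have hz' : Z c (n+(t+1)) (j * 2^(t+1) + r) = 2 * Z c (n+t) p - (Z c (n+t) p)^2 := by
        rw [show n+(t+1) = (n+t)+1 from rfl, hidx, hb, add_zero, Z_even]
      have step1 : Z c (n+(t+1)) (j * 2^(t+1) + r) ≤ (2:ℝ)^(E + 1) := by
        rw [hz']
        calc 2 * Z c (n+t) p - (Z c (n+t) p)^2 ≤ 2 * Z c (n+t) p := by nlinarith
          _ ≤ 2 * (2:ℝ)^E := by linarith
          _ = (2:ℝ)^(E+1) := by
              rw [Real.rpow_add (by norm_num : (0:ℝ) < 2), Real.rpow_one]; ring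
      refine step1.trans (Real.rpow_le_rpow_of_exponent_le (by norm_num) ?_)
      rw [hw, hEdef]
      have h1 : (1:ℝ) ≤ (2:ℝ)^(w q) := one_le_pow₀ (by norm_num)
      push_cast
      nlinarith
    · -- odd step
      have hw : w r = w q + 1 := by rw [hrq, hb, w_two_mul_add_one]
      have hz' : Z c (n+(t+1)) (j * 2^(t+1) + r) = (Z c (n+t) p)^2 := by
        rw [show n+(t+1) = (n+t)+1 from rfl, hidx, hb, Z_odd]
      have step1 : Z c (n+(t+1)) (j * 2^(t+1) + r) ≤ (2:ℝ)^(E + E) := by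
        rw [hz', Real.rpow_add (by norm_num : (0:ℝ) < 2)]
        calc (Z c (n+t) p)^2 ≤ ((2:ℝ)^E)^2 := by nlinarith
          _ = (2:ℝ)^E * (2:ℝ)^E := sq _
      refine step1.trans (le_of_eq ?_)
      rw [hw, hEdef, pow_succ]
      push_cast
      ring

lemma descend_le {c : ℝ} (hc : c ∈ Set.Icc (0:ℝ) 1) {e : ℝ} {t n j r k : ℕ}
    (hr : r < 2^t) (hk : k ≤ w r) (hneg : e + (t:ℝ) - (k:ℝ) ≤ 0)
    (hz : Z c n j ≤ (2:ℝ)^e) :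
    Z c (n+t) (j * 2^t + r) ≤ (2:ℝ)^(((2:ℝ)^k) * (e + (t:ℝ) - (k:ℝ))) := by
  refine (descend hc e t n j r hr hz).trans
    (Real.rpow_le_rpow_of_exponent_le (by norm_num) ?_)
  have hkr : ((k:ℝ)) ≤ (w r : ℝ) := by exact_mod_cast hk
  have hpow : ((2:ℝ)^k) ≤ (2:ℝ)^(w r) := pow_le_pow_right₀ (by norm_num) hk
  have h1 : e + (t:ℝ) - (w r:ℝ) ≤ e + (t:ℝ) - (k:ℝ) := by linarith
  have hposk : (0:ℝ) < (2:ℝ)^k := by positivity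
  calc ((2:ℝ)^(w r)) * (e + (t:ℝ) - (w r:ℝ))
      ≤ ((2:ℝ)^(w r)) * (e + (t:ℝ) - (k:ℝ)) := by nlinarith
    _ ≤ ((2:ℝ)^k) * (e + (t:ℝ) - (k:ℝ)) := by nlinarith

lemma card_step (t k : ℕ) (G : Finset ℕ) (S : Finset ℕ)
    (h : ∀ j ∈ G, ∀ r < 2^t, k ≤ w r → j*2^t + r ∈ S) :
    (G.card : ℝ) * (2^t - (((range (2^t)).filter (fun r => ¬ (k ≤ w r))).card : ℝ))
      ≤ (S.card : ℝ) := by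
  classical
  set good := (range (2^t)).filter (fun r => k ≤ w r) with hgood
  have hsplit := Finset.card_filter_add_card_filter_not
    (s := range (2^t)) (p := fun r => k ≤ w r)
  simp only [Finset.card_range] at hsplit
  have hcardgood : (good.card : ℝ)
      = 2^t - (((range (2^t)).filter (fun r => ¬ (k ≤ w r))).card : ℝ) := by
    have hr : (good.card:ℝ) + (((range (2^t)).filter (fun r => ¬ (k ≤ w r))).card : ℝ)
        = ((2^t : ℕ) : ℝ) := by exact_mod_cast hsplit
    push_cast at hr
    linarith
  rw [← hcardgood]
  have hsub : G.biUnion (fun j => good.image (fun r => j*2^t + r)) ⊆ S := by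
    intro x hx
    obtain ⟨j, hj, hx⟩ := Finset.mem_biUnion.mp hx
    obtain ⟨r, hr, rfl⟩ := Finset.mem_image.mp hx
    obtain ⟨hr1, hr2⟩ := Finset.mem_filter.mp hr
    exact h j hj r (Finset.mem_range.mp hr1) hr2
  have hdisj : ∀ j₁ ∈ G, ∀ j₂ ∈ G, j₁ ≠ j₂ →
      Disjoint (good.image (fun r => j₁*2^t + r)) (good.image (fun r => j₂*2^t + r)) := by
    intro j₁ _ j₂ _ hne
    rw [Finset.disjoint_left]
    intro x hx1 hx2
    obtain ⟨r₁, hr₁, he₁⟩ := Finset.mem_image.mp hx1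
    obtain ⟨r₂, hr₂, he₂⟩ := Finset.mem_image.mp hx2
    have h₁ : r₁ < 2^t := Finset.mem_range.mp (Finset.mem_filter.mp hr₁).1
    have h₂ : r₂ < 2^t := Finset.mem_range.mp (Finset.mem_filter.mp hr₂).1
    have hpos : 0 < 2^t := Nat.pow_pos (n := t) (by norm_num)
    have heq : j₁*2^t + r₁ = j₂*2^t + r₂ := he₁.trans he₂.symm
    apply hne
    have e1 : (j₁*2^t + r₁)/2^t = j₁ := by
      rw [mul_comm, Nat.mul_add_div hpos, Nat.div_eq_of_lt h₁, add_zero]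
    have e2 : (j₂*2^t + r₂)/2^t = j₂ := by
      rw [mul_comm, Nat.mul_add_div hpos, Nat.div_eq_of_lt h₂, add_zero]
    rw [← e1, ← e2, heq]
  have hcard : (G.biUnion (fun j => good.image (fun r => j*2^t + r))).card
      = G.card * good.card := by
    rw [Finset.card_biUnion hdisj]
    have himg : ∀ j ∈ G, (good.image (fun r => j*2^t + r)).card = good.card := by
      intro j _
      apply Finset.card_image_of_injective
      intro a b hab
      exact Nat.add_left_cancel hab
    rw [Finset.sum_congr rfl himg, Finset.sum_const, smul_eq_mul]
  have hfin := Finset.card_le_card hsub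
  rw [hcard] at hfin
  exact_mod_cast hfin


lemma markov (N : ℕ) (f : ℕ → ℝ) (hf : ∀ i ∈ range N, 0 ≤ f i) (a : ℝ) (ha : 0 ≤ a)
    (P : ℕ → Prop) [DecidablePred P] (hP : ∀ i ∈ range N, P i → a ≤ f i) :
    (((range N).filter P).card : ℝ) * a ≤ ∑ i ∈ range N, f i := by
  calc (((range N).filter P).card : ℝ) * a = ∑ _i ∈ (range N).filter P, a := by
        rw [Finset.sum_const]; ring
    _ ≤ ∑ i ∈ (range N).filter P, f i := by
        apply Finset.sum_le_sum
        intro i hi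
        obtain ⟨h1, h2⟩ := Finset.mem_filter.mp hi
        exact hP i h1 h2
    _ ≤ ∑ i ∈ range N, f i :=
        Finset.sum_le_sum_of_subset_of_nonneg (Finset.filter_subset _ _) (fun i hi _ => hf i hi)

lemma rho_lt_one : Real.sqrt 3 * (2:ℝ)^((1:ℝ)/10) < 2 := by
  have h10 : ((10:ℕ) : ℝ) = 10 := by norm_num
  have h1 : (Real.sqrt 3 * (2:ℝ)^((1:ℝ)/10))^(10:ℕ) = 486 := by
    rw [mul_pow]
    have e1 : (Real.sqrt 3)^(10:ℕ) = ((Real.sqrt 3)^2)^(5:ℕ) := by ring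
    have e2 : ((2:ℝ)^((1:ℝ)/10))^(10:ℕ) = (2:ℝ)^(((1:ℝ)/10) * 10) := by
      rw [← Real.rpow_natCast ((2:ℝ)^((1:ℝ)/10)) 10, ← Real.rpow_mul (by norm_num : (0:ℝ) ≤ 2)]
      norm_num
    rw [e1, e2, Real.sq_sqrt (by norm_num : (0:ℝ) ≤ 3)]
    norm_num
  have h2 : ((2:ℝ))^(10:ℕ) = 1024 := by norm_num
  have hbase : (0:ℝ) ≤ Real.sqrt 3 * (2:ℝ)^((1:ℝ)/10) := by positivity
  exact lt_of_pow_lt_pow_left₀ 10 (by norm_num) (by rw [h1, h2]; norm_num)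

lemma badfilter (t k : ℕ) (hk : 1 ≤ k) :
    ((range (2^t)).filter (fun r => ¬ (k ≤ w r)))
      = ((range (2^t)).filter (fun r => (w r:ℝ) ≤ ((k-1 : ℕ):ℝ))) := by
  apply Finset.filter_congr
  intro r _
  have h1 : (¬ (k ≤ w r)) ↔ w r ≤ k - 1 := by omega
  have h2 : ((w r : ℝ) ≤ ((k-1 : ℕ):ℝ)) ↔ w r ≤ k - 1 := by exact_mod_cast Iff.rfl
  rw [h2]
  exact iff_iff_implies_and_implies.mpr ⟨h1.mp, h1.mpr⟩


lemma sq_le_two_pow : ∀ k : ℕ, 4 ≤ k → k^2 ≤ 2^k := by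
  intro k hk
  induction k with
  | zero => omega
  | succ k ih =>
    rcases Nat.lt_or_ge k 4 with h | h
    · have hk3 : k = 3 := by omega
      subst hk3; norm_num
    · have h1 := ih h
      have h2 : (k+1)^2 ≤ 2*k^2 := by nlinarith
      calc (k+1)^2 ≤ 2*k^2 := h2
        _ ≤ 2*2^k := by omega
        _ = 2^(k+1) := by rw [pow_succ]; ring

lemma rpow_tenth (n : ℕ) : ((2:ℝ)^((1:ℝ)/10))^n = (2:ℝ)^((n:ℝ)/10) := by
  rw [← Real.rpow_natCast ((2:ℝ)^((1:ℝ)/10)) n, ← Real.rpow_mul (by norm_num : (0:ℝ) ≤ 2),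
    one_div, inv_mul_eq_div]

lemma sqrt_rpow_mul (x : ℝ) (δ : ℝ) (hδ : 0 ≤ δ) :
    Real.sqrt ((2:ℝ)^(x) * δ) = (2:ℝ)^(x/2) * Real.sqrt δ := by
  rw [Real.sqrt_mul (by positivity), Real.sqrt_eq_rpow,
    ← Real.rpow_mul (by norm_num : (0:ℝ) ≤ 2), mul_one_div]

end ZetaPolAux


namespace ZetaPolAux

lemma stage0 (c : ℝ) (hc' : c ∈ Set.Icc (0:ℝ) 1) (δ η : ℝ)
    (hδ0 : 0 < δ) (hδ18 : δ ≤ 1/8) (n : ℕ)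
    (hev : (Real.sqrt 3 * (2:ℝ)^((1:ℝ)/10) / 2)^n ≤ (η/2) * Real.sqrt δ) :
    ((2:ℝ)^n) * (1 - c - 2*δ - η/4)
      ≤ (((Finset.range (2^n)).filter
          (fun j => Z c n j ≤ (2:ℝ)^(-((n:ℝ)/5)))).card : ℝ) := by
  classical
  obtain ⟨hc0, hc1⟩ := hc'
  set G0 := (Finset.range (2^n)).filter (fun j => Z c n j ≤ (2:ℝ)^(-((n:ℝ)/5))) with hG0def
  set Abig := (Finset.range (2^n)).filter (fun j => 1 - δ < Z c n j) with hAbigdef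
  set Amid := (Finset.range (2^n)).filter
    (fun j => (¬ (Z c n j ≤ (2:ℝ)^(-((n:ℝ)/5)))) ∧ Z c n j ≤ 1 - δ) with hAmiddef
  have hcov : (Finset.range (2^n)).filter
      (fun j => ¬ (Z c n j ≤ (2:ℝ)^(-((n:ℝ)/5)))) ⊆ Abig ∪ Amid := by
    intro j hjm
    obtain ⟨hjr, hjp⟩ := Finset.mem_filter.mp hjm
    rw [Finset.mem_union]
    by_cases h : Z c n j ≤ 1 - δ
    · right; exact Finset.mem_filter.mpr ⟨hjr, hjp, h⟩
    · left; exact Finset.mem_filter.mpr ⟨hjr, by linarith [not_le.mp h]⟩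
  have hmA : (Abig.card:ℝ) * (1 - δ) ≤ ((2:ℝ)^n) * c := by
    have h := markov (2^n) (fun j => Z c n j)
      (fun i _ => (Z_mem ⟨hc0, hc1⟩ _ _).1) (1-δ) (by linarith)
      (fun j => 1 - δ < Z c n j) (fun i _ h => le_of_lt h)
    rw [Z_sum] at h
    exact h
  have hAbigle : (Abig.card:ℝ) ≤ ((2:ℝ)^n) * (c + 2*δ) := by
    have hp : (0:ℝ) < (2:ℝ)^n := by positivity
    have hbr : c ≤ (c+2*δ)*(1-δ) := by nlinarith
    have hfin : (Abig.card:ℝ) * (1-δ) ≤ (((2:ℝ)^n) * (c + 2*δ)) * (1-δ) := by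
      refine le_trans hmA ?_
      nlinarith [mul_le_mul_of_nonneg_left hbr hp.le]
    exact le_of_mul_le_mul_right hfin (by linarith)
  have hmM : (Amid.card:ℝ) * Real.sqrt ((2:ℝ)^(-((n:ℝ)/5)) * δ)
      ≤ Real.sqrt 3 ^ n * (1/2) := by
    refine le_trans (markov (2^n)
      (fun j => Real.sqrt (Z c n j * (1 - Z c n j)))
      (fun i _ => Real.sqrt_nonneg _) _ (Real.sqrt_nonneg _) _ ?_) (H_le ⟨hc0, hc1⟩ n)
    intro i _ hPi
    obtain ⟨hp1, hp2⟩ := hPi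
    have hth : (2:ℝ)^(-((n:ℝ)/5)) ≤ Z c n i := le_of_lt (not_le.mp hp1)
    have hδle : δ ≤ 1 - Z c n i := by linarith
    apply Real.sqrt_le_sqrt
    exact mul_le_mul hth hδle (le_of_lt hδ0) (le_trans (by positivity) hth)
  have ha2eq : Real.sqrt ((2:ℝ)^(-((n:ℝ)/5)) * δ)
      = (2:ℝ)^(-((n:ℝ)/10)) * Real.sqrt δ := by
    have hexp : (-(((n:ℕ):ℝ)/5))/2 = -((n:ℝ)/10) := by ring
    rw [sqrt_rpow_mul _ _ (le_of_lt hδ0), hexp]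
  have hAmidle : (Amid.card:ℝ) ≤ (η/4) * (2:ℝ)^n := by
    have ha2pos : (0:ℝ) < Real.sqrt ((2:ℝ)^(-((n:ℝ)/5)) * δ) := by
      apply Real.sqrt_pos.mpr
      positivity
    have hρeq : (Real.sqrt 3 * (2:ℝ)^((1:ℝ)/10) / 2)^n * ((2:ℝ)^n)
        = Real.sqrt 3 ^ n * (2:ℝ)^((n:ℝ)/10) := by
      rw [div_pow, mul_pow, rpow_tenth, div_mul_cancel₀]
      positivity
    have hid : (2:ℝ)^((n:ℝ)/10) * (2:ℝ)^(-((n:ℝ)/10)) = 1 := by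
      rw [← Real.rpow_add (by norm_num : (0:ℝ) < 2)]
      norm_num
    have hkey : Real.sqrt 3 ^ n * (1/2)
        ≤ (η/4) * (2:ℝ)^n * Real.sqrt ((2:ℝ)^(-((n:ℝ)/5)) * δ) := by
      have h2 : (Real.sqrt 3 * (2:ℝ)^((1:ℝ)/10) / 2)^n * ((2:ℝ)^n)
          ≤ ((η/2) * Real.sqrt δ) * ((2:ℝ)^n) :=
        mul_le_mul_of_nonneg_right hev (by positivity)
      rw [hρeq] at h2
      rw [ha2eq]
      have h4 : Real.sqrt 3 ^ n
          = (Real.sqrt 3 ^ n * (2:ℝ)^((n:ℝ)/10)) * (2:ℝ)^(-((n:ℝ)/10)) := by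
        rw [mul_assoc, hid, mul_one]
      have hp : (0:ℝ) ≤ (2:ℝ)^(-((n:ℝ)/10)) := by positivity
      calc Real.sqrt 3 ^ n * (1/2)
          = ((Real.sqrt 3 ^ n * (2:ℝ)^((n:ℝ)/10)) * (2:ℝ)^(-((n:ℝ)/10))) * (1/2) := by
            rw [← h4]
        _ ≤ ((((η/2) * Real.sqrt δ) * ((2:ℝ)^n)) * (2:ℝ)^(-((n:ℝ)/10))) * (1/2) := by
            nlinarith
        _ = (η/4) * (2:ℝ)^n * ((2:ℝ)^(-((n:ℝ)/10)) * Real.sqrt δ) := by ring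
    exact le_of_mul_le_mul_right (le_trans hmM hkey) ha2pos
  have hsplitc := Finset.card_filter_add_card_filter_not
    (s := Finset.range (2^n)) (p := fun j => Z c n j ≤ (2:ℝ)^(-((n:ℝ)/5)))
  have hnotG : (((Finset.range (2^n)).filter
      (fun j => ¬ (Z c n j ≤ (2:ℝ)^(-((n:ℝ)/5))))).card : ℝ)
      ≤ (Abig.card:ℝ) + (Amid.card:ℝ) := by
    have h := le_trans (Finset.card_le_card hcov) (Finset.card_union_le Abig Amid)
    exact_mod_cast h
  have hGN : (G0.card:ℝ) + (((Finset.range (2^n)).filter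
      (fun j => ¬ (Z c n j ≤ (2:ℝ)^(-((n:ℝ)/5))))).card : ℝ) = (2:ℝ)^n := by
    rw [Finset.card_range] at hsplitc
    have h2 : ((2^n : ℕ):ℝ) = (2:ℝ)^n := by push_cast; ring
    rw [← h2]
    exact_mod_cast hsplitc
  linarith

lemma badcount (t k : ℕ) (hk1 : 1 ≤ k) (g E : ℝ) (hg : 0 < g)
    (hgap : ((k - 1:ℕ):ℝ) ≤ (t:ℝ)/2 - g) (hE : (t:ℝ) ≤ 4 * E * g^2) :
    ((((Finset.range (2^t)).filter (fun r => ¬ (k ≤ w r))).card : ℝ)) ≤ E * 2^t := by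
  classical
  rw [badfilter _ _ hk1]
  have hθ2 : ((k - 1:ℕ):ℝ) ≤ (t:ℝ)/2 := by linarith
  have hch := chebyshev t (((k - 1:ℕ)):ℝ) hθ2
  set B := ((((Finset.range (2^t)).filter
    (fun r => (w r:ℝ) ≤ ((k - 1:ℕ):ℝ))).card : ℝ)) with hBdef
  have hcard0 : (0:ℝ) ≤ B := by rw [hBdef]; exact Nat.cast_nonneg _
  have hP : (0:ℝ) < 2^t := by positivity
  have hsq : B * g^2 ≤ (t:ℝ) * 2^t/4 := by
    have h1 : B * g^2 ≤ B * ((t:ℝ)/2 - ((k - 1:ℕ):ℝ))^2 := by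
      apply mul_le_mul_of_nonneg_left _ hcard0
      apply pow_le_pow_left₀ (le_of_lt hg) (by linarith)
    exact le_trans h1 hch
  have hsq2 : B * g^2 ≤ (E * 2^t) * g^2 := by
    have h2 : (t:ℝ) * 2^t/4 ≤ (E * 2^t) * g^2 := by nlinarith
    linarith
  exact le_of_mul_le_mul_right hsq2 (by positivity)


set_option maxHeartbeats 1600000 in
lemma main_count (ζ : ℕ → ℕ → ℝ) (c : ℝ) (hc' : c ∈ Set.Icc (0:ℝ) 1)
    (hzZ : ∀ mm i, i < 2^mm → ζ mm i ≤ Z c mm i)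
    (β β' ε δ η : ℝ) (hββ' : β ≤ β') (hη : 0 < η)
    (hδ0 : 0 < δ) (hδ18 : δ ≤ 1/8) (hδη4 : 2*δ ≤ η/4)
    (m n1 t1 n0 k1 t2 k2 : ℕ)
    (hsum1 : n0 + t1 = n1) (hsum2 : n1 + t2 = m)
    (hk11 : 1 ≤ k1) (hk21 : 1 ≤ k2) (ht1pos : 0 < t1)
    (hstage0ev : (Real.sqrt 3 * (2:ℝ)^((1:ℝ)/10) / 2)^n0 ≤ (η/2) * Real.sqrt δ)
    (h3N : 5*(t1+1) ≤ n0 + 5*k1)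
    (hm4 : m ≤ 2^k1)
    (hk2f : β' * (m:ℝ) < (k2:ℝ))
    (hq1 : k1 - 1 = t1/4)
    (h16 : (16:ℝ) ≤ η * t1)
    (hεm1 : (1:ℝ) ≤ ε*m)
    (hgap2 : ε*m ≤ (t2:ℝ)/2 - ((k2-1:ℕ):ℝ))
    (hm5 : (m:ℝ) ≤ η*(ε*m)^2) :
    1 - c - η ≤ (((Finset.range (2^m)).filter
        (fun i => ζ m i < (2:ℝ)^(-(((2:ℝ)^m)^β)))).card : ℝ) / (2:ℝ)^m := by
  classical
  have hidx : ∀ (a b j r : ℕ), j < 2^a → r < 2^b → j*2^b + r < 2^(a+b) := by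
    intro a b j r hj hr
    calc j*2^b + r < j*2^b + 2^b := by omega
      _ = (j+1)*2^b := by ring
      _ ≤ 2^a*2^b := Nat.mul_le_mul_right _ hj
      _ = 2^(a+b) := (pow_add 2 a b).symm
  set G0 := (Finset.range (2^n0)).filter
    (fun j => Z c n0 j ≤ (2:ℝ)^(-((n0:ℝ)/5))) with hG0def
  set G1 := (Finset.range (2^n1)).filter
    (fun j => Z c n1 j ≤ (2:ℝ)^(-(m:ℝ))) with hG1def
  set S := (Finset.range (2^m)).filter
    (fun i => ζ m i < (2:ℝ)^(-(((2:ℝ)^m)^β))) with hSdef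
  have hn1m : n1 ≤ m := by omega
  -- stage 2 descent
  have hstep2 : ∀ j ∈ G1, ∀ r < 2^t2, k2 ≤ w r → j*2^t2 + r ∈ S := by
    intro j hj r hr hk
    obtain ⟨hjr, hjZ⟩ := Finset.mem_filter.mp hj
    have hjlt := Finset.mem_range.mp hjr
    have hneg : -(m:ℝ) + (t2:ℝ) - (k2:ℝ) ≤ 0 := by
      have h1 : (t2:ℝ) ≤ m := by exact_mod_cast (show t2 ≤ m by omega)
      have h2 : (0:ℝ) ≤ k2 := Nat.cast_nonneg _
      linarith
    have hd := descend_le hc' (e := -(m:ℝ)) hr hk hneg hjZ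
    rw [hsum2] at hd
    have hmem : j*2^t2 + r < 2^m := by
      have h := hidx n1 t2 j r hjlt hr
      rwa [hsum2] at h
    refine Finset.mem_filter.mpr ⟨Finset.mem_range.mpr hmem, ?_⟩
    have hζZ := hzZ m _ hmem
    have hE2 : ((2:ℝ)^k2) * (-(m:ℝ) + (t2:ℝ) - (k2:ℝ)) < -(((2:ℝ)^m)^β) := by
      have ht2R : (t2:ℝ) = (m:ℝ) - (n1:ℝ) := by
        have h1 : t2 = m - n1 := by omega
        rw [h1]
        push_cast [Nat.cast_sub hn1m]
        ring
      have hτ : ((2:ℝ)^m)^β < (2:ℝ)^k2 := by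
        have e1 : (((2:ℝ)^m))^β = (2:ℝ)^((m:ℝ)*β) := by
          rw [← Real.rpow_natCast 2 m, ← Real.rpow_mul (by norm_num : (0:ℝ) ≤ 2)]
        have e3 : (2:ℝ)^((m:ℝ)*β) ≤ (2:ℝ)^((m:ℝ)*β') := by
          apply Real.rpow_le_rpow_of_exponent_le (by norm_num)
          have hm0 : (0:ℝ) ≤ (m:ℝ) := Nat.cast_nonneg m
          nlinarith
        have e4 : (2:ℝ)^((m:ℝ)*β') < (2:ℝ)^((k2:ℝ)) := by
          apply Real.rpow_lt_rpow_of_exponent_lt (by norm_num)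
          rw [mul_comm]
          exact hk2f
        have e5 : (2:ℝ)^((k2:ℝ)) = (2:ℝ)^k2 := Real.rpow_natCast 2 _
        rw [e1, ← e5]
        exact lt_of_le_of_lt e3 e4
      have hk2pos : (1:ℝ) ≤ (2:ℝ)^k2 := one_le_pow₀ (by norm_num)
      have hn1R : (1:ℝ) ≤ (n1:ℝ) + (k2:ℝ) := by
        have h1 : (1:ℝ) ≤ (k2:ℝ) := by exact_mod_cast hk21
        have h2 : (0:ℝ) ≤ (n1:ℝ) := Nat.cast_nonneg _
        linarith
      have heq : ((2:ℝ)^k2) * (-(m:ℝ) + (t2:ℝ) - (k2:ℝ))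
          = -(((2:ℝ)^k2) * ((n1:ℝ) + (k2:ℝ))) := by rw [ht2R]; ring
      rw [heq]
      have h2 : ((2:ℝ)^k2) ≤ ((2:ℝ)^k2) * ((n1:ℝ) + (k2:ℝ)) := by nlinarith
      linarith
    have hlt : Z c m (j*2^t2+r) < (2:ℝ)^(-(((2:ℝ)^m)^β)) :=
      lt_of_le_of_lt hd (Real.rpow_lt_rpow_of_exponent_lt (by norm_num) hE2)
    exact lt_of_le_of_lt hζZ hlt
  -- stage 1 descent
  have hstep1 : ∀ j ∈ G0, ∀ r < 2^t1, k1 ≤ w r → j*2^t1 + r ∈ G1 := by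
    intro j hj r hr hk
    obtain ⟨hjr, hjZ⟩ := Finset.mem_filter.mp hj
    have hjlt := Finset.mem_range.mp hjr
    have h3R : (1:ℝ) ≤ (n0:ℝ)/5 + (k1:ℝ) - (t1:ℝ) := by
      have hcast : (5:ℝ)*((t1:ℝ)+1) ≤ (n0:ℝ) + 5*(k1:ℝ) := by exact_mod_cast h3N
      linarith
    have hneg : -((n0:ℝ)/5) + (t1:ℝ) - (k1:ℝ) ≤ 0 := by linarith
    have hd := descend_le hc' (e := -((n0:ℝ)/5)) hr hk hneg hjZ
    rw [hsum1] at hd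
    have hmem : j*2^t1 + r < 2^n1 := by
      have h := hidx n0 t1 j r hjlt hr
      rwa [hsum1] at h
    refine Finset.mem_filter.mpr ⟨Finset.mem_range.mpr hmem, ?_⟩
    refine le_trans hd (Real.rpow_le_rpow_of_exponent_le (by norm_num) ?_)
    have hm4R : (m:ℝ) ≤ (2:ℝ)^k1 := by
      have h1 : ((2^k1 : ℕ):ℝ) = (2:ℝ)^k1 := by push_cast; ring
      rw [← h1]
      exact_mod_cast hm4
    have hpos : (0:ℝ) < (2:ℝ)^k1 := by positivity
    nlinarith [mul_le_mul_of_nonneg_left h3R (le_of_lt hpos)]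
  -- stage 0
  have hG0card := stage0 c hc' δ η hδ0 hδ18 n0 hstage0ev
  rw [← hG0def] at hG0card
  -- chebyshev counts
  have ht1R : (0:ℝ) < t1 := by exact_mod_cast ht1pos
  have hbad1 : ((((Finset.range (2^t1)).filter (fun r => ¬ (k1 ≤ w r))).card : ℝ))
      ≤ (η/4) * 2^t1 := by
    refine badcount t1 k1 hk11 ((t1:ℝ)/4) (η/4) (by positivity) ?_ ?_
    · have hθ4 : ((k1 - 1:ℕ):ℝ) ≤ (t1:ℝ)/4 := by
        rw [hq1]
        exact_mod_cast Nat.cast_div_le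
      linarith
    · nlinarith
  have hbad2 : ((((Finset.range (2^t2)).filter (fun r => ¬ (k2 ≤ w r))).card : ℝ))
      ≤ (η/4) * 2^t2 := by
    refine badcount t2 k2 hk21 (ε*m) (η/4) (by linarith) (by linarith) ?_
    have ht2m : (t2:ℝ) ≤ m := by exact_mod_cast (show t2 ≤ m by omega)
    nlinarith
  -- counting steps
  have hcs1 := card_step t1 k1 G0 G1 hstep1
  have hcs2 := card_step t2 k2 G1 S hstep2
  set b1 := ((((Finset.range (2^t1)).filter (fun r => ¬ (k1 ≤ w r))).card : ℝ)) with hb1def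
  set b2 := ((((Finset.range (2^t2)).filter (fun r => ¬ (k2 ≤ w r))).card : ℝ)) with hb2def
  set a0 := (G0.card:ℝ) with ha0def
  set a1 := (G1.card:ℝ) with ha1def
  set aS := (S.card:ℝ) with haSdef
  have hG0le : a0 ≤ (2:ℝ)^n0 := by
    have h : G0.card ≤ 2^n0 := by
      rw [hG0def]
      exact le_trans (Finset.card_filter_le _ _) (le_of_eq (Finset.card_range _))
    have h2 : ((2^n0 : ℕ):ℝ) = (2:ℝ)^n0 := by push_cast; ring
    rw [ha0def, ← h2]
    exact_mod_cast h
  have hG1le : a1 ≤ (2:ℝ)^n1 := by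
    have h : G1.card ≤ 2^n1 := by
      rw [hG1def]
      exact le_trans (Finset.card_filter_le _ _) (le_of_eq (Finset.card_range _))
    have h2 : ((2^n1 : ℕ):ℝ) = (2:ℝ)^n1 := by push_cast; ring
    rw [ha1def, ← h2]
    exact_mod_cast h
  have hP0 : (0:ℝ) < 2^n0 := by positivity
  have hP1 : (0:ℝ) < 2^t1 := by positivity
  have hP2 : (0:ℝ) < 2^t2 := by positivity
  have hb1n : (0:ℝ) ≤ b1 := by rw [hb1def]; exact Nat.cast_nonneg _
  have hb2n : (0:ℝ) ≤ b2 := by rw [hb2def]; exact Nat.cast_nonneg _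
  have hG0n : (0:ℝ) ≤ a0 := by rw [ha0def]; exact Nat.cast_nonneg _
  have hG1n : (0:ℝ) ≤ a1 := by rw [ha1def]; exact Nat.cast_nonneg _
  have hpown1 : (2:ℝ)^n1 = 2^n0 * 2^t1 := by
    rw [← pow_add, hsum1]
  have hpowm : (2:ℝ)^m = 2^n1 * 2^t2 := by
    rw [← pow_add, hsum2]
  have h1 : a0 * 2^t1 - (η/4) * 2^t1 * 2^n0 ≤ a1 := by
    have hprod : a0 * b1 ≤ (2^n0) * ((η/4) * 2^t1) :=
      mul_le_mul hG0le hbad1 hb1n (le_of_lt hP0)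
    nlinarith [hcs1, hprod]
  have h2 : a1 * 2^t2 - (η/4) * 2^t2 * (2^n0 * 2^t1) ≤ aS := by
    have hG1le' : a1 ≤ 2^n0 * 2^t1 := by rw [← hpown1]; exact hG1le
    have hprod : a1 * b2 ≤ (2^n0 * 2^t1) * ((η/4) * 2^t2) :=
      mul_le_mul hG1le' hbad2 hb2n (by positivity)
    nlinarith [hcs2, hprod]
  have hfinal : (1 - c - η) * ((2:ℝ)^m) ≤ aS := by
    rw [hpowm, hpown1]
    have h3 : (a0 * 2^t1 - (η/4) * 2^t1 * 2^n0) * 2^t2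
        ≤ a1 * 2^t2 := mul_le_mul_of_nonneg_right h1 (le_of_lt hP2)
    have h4 : ((2:ℝ)^n0 * (1 - c - 2*δ - η/4)) * (2^t1 * 2^t2)
        ≤ a0 * (2^t1 * 2^t2) :=
      mul_le_mul_of_nonneg_right hG0card (by positivity)
    have h5 : (0:ℝ) ≤ (η/4 - 2*δ) * (2^n0 * 2^t1 * 2^t2) := by
      apply mul_nonneg (by linarith)
      positivity
    nlinarith [h2, h3, h4, h5]
  have hpos2m : (0:ℝ) < (2:ℝ)^m := by positivity
  rw [le_div_iff₀ hpos2m]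
  exact hfinal

end ZetaPolAux

set_option maxHeartbeats 1000000 in
open ZetaPolAux in
/-- polarization of the Bhattacharyya-type recursion.  Here
`ζ m i` corresponds to `ζ(i,m)`; removing the last (least significant) bit of
`i` gives `i / 2`, and the last bit is `i % 2`. -/
theorem zeta_polarization (ζ : ℕ → ℕ → ℝ)
    (hbound : ∀ m, ∀ i < 2 ^ m, ζ m i ∈ Set.Icc (0 : ℝ) 1)
    (hrec : ∀ m : ℕ, ∀ i < 2 ^ (m + 1),
      (i % 2 = 0 → ζ (m + 1) i ≤ 2 * ζ m (i / 2) - (ζ m (i / 2)) ^ 2) ∧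
      (i % 2 = 1 → ζ (m + 1) i ≤ (ζ m (i / 2)) ^ 2))
    (β : ℝ) (hβ : β < 1 / 2) :
    1 - ζ 0 0 ≤
      Filter.liminf
        (fun m : ℕ =>
          (((Finset.range (2 ^ m)).filter
              (fun i => ζ m i < (2 : ℝ) ^ (-(((2 : ℝ) ^ m) ^ β)))).card : ℝ)
            / (2 : ℝ) ^ m)
        Filter.atTop := by
  classical
  have hc : ζ 0 0 ∈ Set.Icc (0:ℝ) 1 := hbound 0 0 (by norm_num)
  set c := ζ 0 0 with hcdef
  obtain ⟨hc0, hc1⟩ := hc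
  have hc' : c ∈ Set.Icc (0:ℝ) 1 := ⟨hc0, hc1⟩
  have hzZ : ∀ m, ∀ i, i < 2^m → ζ m i ≤ Z c m i := by
    intro m
    induction m with
    | zero =>
      intro i hi
      have hi0 : i = 0 := by simpa using hi
      subst hi0; simp [Z, hcdef]
    | succ m ih =>
      intro i hi
      have hq : i/2 < 2^m := by
        have h2 : (2:ℕ)^(m+1) = 2^m*2 := pow_succ 2 m
        omega
      have hIH := ih (i/2) hq
      obtain ⟨hz0, hz1⟩ := Z_mem hc' m (i/2)
      obtain ⟨hζ0, hζ1⟩ := hbound m (i/2) hq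
      have hb : i % 2 = 0 ∨ i % 2 = 1 := by omega
      rcases hb with hb | hb
      · have h1 := (hrec m i hi).1 hb
        have hie : i = 2*(i/2) := by omega
        have hZe : Z c (m+1) i = 2 * Z c m (i/2) - (Z c m (i/2))^2 := by
          conv_lhs => rw [hie]
          rw [Z_even]
        rw [hZe]
        nlinarith
      · have h1 := (hrec m i hi).2 hb
        have hie : i = 2*(i/2)+1 := by omega
        have hZo : Z c (m+1) i = (Z c m (i/2))^2 := by
          conv_lhs => rw [hie]
          rw [Z_odd]
        rw [hZo]
        nlinarith
  have key : ∀ η : ℝ, 0 < η → ∀ᶠ m in atTop,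
      1 - c - η ≤ (((Finset.range (2 ^ m)).filter
          (fun i => ζ m i < (2 : ℝ) ^ (-(((2 : ℝ) ^ m) ^ β)))).card : ℝ) / (2 : ℝ) ^ m := by

    intro η hη
    set β' := max β (1/4) with hβ'def
    have hβ'lt : β' < 1/2 := max_lt hβ (by norm_num)
    have hβ'ge : (1/4:ℝ) ≤ β' := le_max_right _ _
    have hββ' : β ≤ β' := le_max_left _ _
    set ε := (1/2 - β')/2 with hεdef
    have hε : 0 < ε := by rw [hεdef]; linarith
    have hε8 : ε ≤ 1/8 := by rw [hεdef]; linarith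
    set δ := min (η/8) (1/8) with hδdef
    have hδ0 : 0 < δ := lt_min (by linarith) (by norm_num)
    have hδ18 : δ ≤ 1/8 := min_le_right _ _
    have hδη : δ ≤ η/8 := min_le_left _ _
    set n1 : ℕ → ℕ := fun m => ⌈ε * m⌉₊ with hn1def
    set t1 : ℕ → ℕ := fun m => n1 m / 7 + 1 with ht1def
    set n0 : ℕ → ℕ := fun m => n1 m - t1 m with hn0def
    set k1 : ℕ → ℕ := fun m => t1 m / 4 + 1 with hk1def
    set t2 : ℕ → ℕ := fun m => m - n1 m with ht2def
    set k2 : ℕ → ℕ := fun m => ⌊β' * m⌋₊ + 1 with hk2def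
    have hn1ge : ∀ m : ℕ, ε * m ≤ n1 m := fun m => Nat.le_ceil _
    have hn1le : ∀ m : ℕ, (n1 m : ℝ) ≤ ε * m + 1 := by
      intro m
      exact le_of_lt (Nat.ceil_lt_add_one (by positivity))
    have hn1T : Tendsto n1 atTop atTop := by
      rw [tendsto_atTop_atTop]
      intro b
      refine ⟨⌈(b:ℝ)/ε⌉₊, fun m hm => ?_⟩
      have h1 : ((b:ℝ)/ε) ≤ m := le_trans (Nat.le_ceil _) (by exact_mod_cast hm)
      have h2 : (b:ℝ) ≤ ε * m := by rw [div_le_iff₀ hε] at h1; linarith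
      exact_mod_cast le_trans h2 (hn1ge m)
    have ht1T : Tendsto t1 atTop atTop := by
      rw [tendsto_atTop_atTop]
      intro b
      obtain ⟨N, hN⟩ := tendsto_atTop_atTop.mp hn1T (7*b)
      refine ⟨N, fun m hm => ?_⟩
      have := hN m hm
      simp only [ht1def]
      omega
    have hn0T : Tendsto n0 atTop atTop := by
      rw [tendsto_atTop_atTop]
      intro b
      obtain ⟨N, hN⟩ := tendsto_atTop_atTop.mp hn1T (2*b+9)
      refine ⟨N, fun m hm => ?_⟩
      have := hN m hm
      simp only [hn0def, ht1def]
      omega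
    set ρ := Real.sqrt 3 * (2:ℝ)^((1:ℝ)/10) / 2 with hρdef
    have hρ0 : 0 ≤ ρ := by positivity
    have hρ1 : ρ < 1 := by
      have := rho_lt_one
      rw [hρdef]; linarith
    have hρT : Tendsto (fun m => ρ^(n0 m)) atTop (nhds 0) :=
      (tendsto_pow_atTop_nhds_zero_of_lt_one hρ0 hρ1).comp hn0T
    have ev1 : ∀ᶠ m : ℕ in atTop, (16:ℝ)/η ≤ t1 m := by
      obtain ⟨N, hN⟩ := tendsto_atTop_atTop.mp ht1T ⌈(16:ℝ)/η⌉₊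
      filter_upwards [eventually_ge_atTop N] with m hm
      exact le_trans (Nat.le_ceil _) (by exact_mod_cast hN m hm)
    have ev2 : ∀ᶠ m : ℕ in atTop, ρ^(n0 m) ≤ (η/2) * Real.sqrt δ := by
      have hpos : (0:ℝ) < (η/2) * Real.sqrt δ := by positivity
      filter_upwards [hρT.eventually_lt_const hpos] with m hm using le_of_lt hm
    have ev3 : ∀ᶠ m : ℕ in atTop, 5*(t1 m + 1) ≤ n0 m + 5*(k1 m) := by
      obtain ⟨N, hN⟩ := tendsto_atTop_atTop.mp hn1T 200
      filter_upwards [eventually_ge_atTop N] with m hm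
      have := hN m hm
      simp only [hn0def, ht1def, hk1def]
      omega
    have ev4 : ∀ᶠ m : ℕ in atTop, m ≤ 2^(k1 m) := by
      have evA : ∀ᶠ m : ℕ in atTop, (139:ℝ) ≤ ε * m := by
        filter_upwards [eventually_ge_atTop ⌈(139:ℝ)/ε⌉₊] with m hm
        have h1 : ((139:ℝ)/ε) ≤ m := le_trans (Nat.le_ceil _) (by exact_mod_cast hm)
        rw [div_le_iff₀ hε] at h1; linarith
      have evB : ∀ᶠ m : ℕ in atTop, (784 + 54*ε)/(ε^2) ≤ (m:ℝ) := by
        filter_upwards [eventually_ge_atTop ⌈(784 + 54*ε)/(ε^2)⌉₊] with m hm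
        exact le_trans (Nat.le_ceil _) (by exact_mod_cast hm)
      filter_upwards [evA, evB] with m hA hB
      have hk1n1 : n1 m / 28 ≤ k1 m := by
        simp only [ht1def, hk1def]
        omega
      have hdiv : ((n1 m:ℝ) - 27)/28 ≤ ((n1 m / 28 : ℕ) : ℝ) := by
        have h1 : n1 m ≤ 28*(n1 m/28) + 27 := by omega
        have h2 : (n1 m:ℝ) ≤ 28*((n1 m/28 : ℕ):ℝ) + 27 := by exact_mod_cast h1
        linarith
      have hk1R : (ε * m - 27)/28 ≤ (k1 m : ℝ) := by
        have h1 : ((n1 m / 28 : ℕ) : ℝ) ≤ k1 m := by exact_mod_cast hk1n1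
        have h2 := hn1ge m
        linarith
      have hk14 : 4 ≤ k1 m := by
        have h4 : (4:ℝ) ≤ (k1 m :ℝ) := by
          have h5 : (4:ℝ) ≤ (ε*m - 27)/28 := by linarith
          linarith
        exact_mod_cast h4
      have hmk : (m:ℝ) ≤ (k1 m:ℝ)^2 := by
        have h1 : (0:ℝ) ≤ ε*m - 27 := by linarith
        have hB2 : 784*(m:ℝ) + 54*ε*(m:ℝ) ≤ (ε*(m:ℝ))^2 := by
          have hm0 : (0:ℝ) ≤ (m:ℝ) := Nat.cast_nonneg m
          rw [div_le_iff₀ (by positivity : (0:ℝ) < ε^2)] at hB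
          nlinarith [mul_le_mul_of_nonneg_left hB hm0]
        have h2 : 784*(m:ℝ) ≤ (ε*m - 27)^2 := by nlinarith
        nlinarith [hk1R]
      have hmk' : m ≤ (k1 m)^2 := by exact_mod_cast hmk
      exact le_trans hmk' (sq_le_two_pow _ hk14)
    have ev5 : ∀ᶠ m : ℕ in atTop, (m:ℝ) ≤ η * (ε * m)^2 := by
      filter_upwards [eventually_ge_atTop (⌈1/(η * ε^2)⌉₊ + 1)] with m hm
      have h2 : ((⌈1/(η * ε^2)⌉₊:ℝ)) ≤ m := by exact_mod_cast Nat.le_of_succ_le hm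
      have h0 : (1:ℝ)/(η*ε^2) ≤ m := le_trans (Nat.le_ceil _) h2
      have hm0 : (0:ℝ) ≤ (m:ℝ) := Nat.cast_nonneg m
      rw [div_le_iff₀ (by positivity)] at h0
      nlinarith
    have ev6 : ∀ᶠ m : ℕ in atTop, 2 * n1 m ≤ m := by
      filter_upwards [eventually_ge_atTop 3] with m hm
      have h1 := hn1le m
      have hm3 : (3:ℝ) ≤ m := by exact_mod_cast hm
      have h3 : ((2*(n1 m) : ℕ):ℝ) ≤ m := by push_cast; nlinarith
      exact_mod_cast h3
    have ev7 : ∀ᶠ m : ℕ in atTop, (1:ℝ) ≤ ε*m ∧ ε * m ≤ (t2 m:ℝ)/2 - ((k2 m - 1:ℕ):ℝ) := by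
      filter_upwards [ev6, eventually_ge_atTop ⌈(2:ℝ)/ε⌉₊] with m h6 hm
      have hεm : (2:ℝ) ≤ ε*m := by
        have h1 : ((2:ℝ)/ε) ≤ m := le_trans (Nat.le_ceil _) (by exact_mod_cast hm)
        rw [div_le_iff₀ hε] at h1; linarith
      refine ⟨by linarith, ?_⟩
      have hk2e : k2 m - 1 = ⌊β' * m⌋₊ := by simp only [hk2def]; omega
      have hfl : ((⌊β' * m⌋₊:ℕ):ℝ) ≤ β'*m := Nat.floor_le (by positivity)
      have hn1lem : n1 m ≤ m := by omega
      have ht2e : (t2 m : ℝ) = (m:ℝ) - n1 m := by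
        simp only [ht2def]
        push_cast [Nat.cast_sub hn1lem]
        ring
      rw [hk2e, ht2e]
      have h1 := hn1le m
      have hβ'm : β' * m = (m:ℝ)/2 - 2*(ε*m) := by rw [hεdef]; ring
      linarith
    -- main eventual bound
    filter_upwards [ev1, ev2, ev3, ev4, ev5, ev6, ev7, eventually_ge_atTop 1]
      with m hm1 hm2 hm3 hm4 hm5 hm6 hm7 hm8
    have hn11 : 1 ≤ n1 m := by
      have h0 : (0:ℝ) < ε * m := by
        have h1 : (1:ℝ) ≤ (m:ℝ) := by exact_mod_cast hm8
        positivity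
      exact Nat.ceil_pos.mpr h0
    have ht1n1 : t1 m ≤ n1 m := by simp only [ht1def]; omega
    have hsum1 : n0 m + t1 m = n1 m := by simp only [hn0def]; omega
    have hn1m : n1 m ≤ m := by omega
    have hsum2 : n1 m + t2 m = m := by simp only [ht2def]; omega
    have ht1pos : 0 < t1 m := by simp only [ht1def]; omega
    have hk11 : 1 ≤ k1 m := by simp only [hk1def]; omega
    have hk21 : 1 ≤ k2 m := by simp only [hk2def]; omega
    have hq1 : k1 m - 1 = t1 m / 4 := by simp only [hk1def]; omega
    have hk2f : β' * (m:ℝ) < ((k2 m : ℕ):ℝ) := by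
      have h := Nat.lt_floor_add_one (β' * m)
      have h2 : ((k2 m : ℕ):ℝ) = ((⌊β' * (m:ℝ)⌋₊ : ℕ):ℝ) + 1 := by
        simp only [hk2def]; push_cast; ring
      rw [h2]
      exact h
    have h16 : (16:ℝ) ≤ η * t1 m := by
      rw [div_le_iff₀ hη] at hm1
      linarith
    exact main_count ζ c hc' hzZ β β' ε δ η hββ' hη hδ0 hδ18 (by linarith)
      m (n1 m) (t1 m) (n0 m) (k1 m) (t2 m) (k2 m) hsum1 hsum2 hk11 hk21 ht1pos
      hm2 hm3 hm4 hk2f hq1 h16 hm7.1 hm7.2 hm5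
  have hb1 : IsBoundedUnder (· ≤ ·) atTop (fun m : ℕ =>
      (((Finset.range (2 ^ m)).filter
          (fun i => ζ m i < (2 : ℝ) ^ (-(((2 : ℝ) ^ m) ^ β)))).card : ℝ) / (2 : ℝ) ^ m) := by
    refine isBoundedUnder_of ⟨1, fun m => ?_⟩
    have h1 : (((Finset.range (2 ^ m)).filter
        (fun i => ζ m i < (2 : ℝ) ^ (-(((2 : ℝ) ^ m) ^ β)))).card : ℝ) ≤ 2^m := by
      have h2 := Finset.card_filter_le (Finset.range (2^m))
        (fun i => ζ m i < (2 : ℝ) ^ (-(((2 : ℝ) ^ m) ^ β)))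
      rw [Finset.card_range] at h2
      exact_mod_cast h2
    rw [div_le_one (by positivity)]
    exact h1
  apply le_of_forall_pos_le_add
  intro η hη
  have h := Filter.le_liminf_of_le hb1.isCoboundedUnder_ge (key η hη)
  linarith
end
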